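/- arXiv:2009.07055 — 6 statements merged into one kernel-verified Lean document; each statement's English description precedes it below -/
import Mathlib

section
/- Suppose the unconfoundedness assumption and the overlap assumption hold. Fix d ∈ {0,1,...,J} and β ∈ ℝ, and suppose L(Y*(d) − β) is integrable. Then E[ (D_d / π*_d(X)) · L(Y − β) ] = E[ L(Y*(d) − β) ]. -/
open MeasureTheory ProbabilityTheory Filter

section Aux

variable {Ω : Type*} [mΩ : MeasurableSpace Ω]

/-- Integration against an a.e.-bounded measurable function is continuous on `L¹`. -/
lemma continuous_integral_mul_L1 (μ : Measure Ω)
    {v : Ω → ℝ} (hv : AEStronglyMeasurable v μ) {C : ℝ} (hC0 : 0 ≤ C)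
    (hbound : ∀ᵐ x ∂μ, |v x| ≤ C) :
    Continuous fun f : Lp ℝ 1 μ => ∫ x, v x * f x ∂μ := by
  have hb' : ∀ᵐ x ∂μ, ‖v x‖ ≤ C := by simpa [Real.norm_eq_abs] using hbound
  have key : ∀ f g : Lp ℝ 1 μ,
      dist (∫ x, v x * f x ∂μ) (∫ x, v x * g x ∂μ) ≤ C * dist f g := by
    intro f g
    have hf : Integrable (fun x => v x * f x) μ := (L1.integrable_coeFn f).bdd_mul hv hb'
    have hg : Integrable (fun x => v x * g x) μ := (L1.integrable_coeFn g).bdd_mul hv hb'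
    have hfg : Integrable (fun x => f x - g x) μ :=
      (L1.integrable_coeFn f).sub (L1.integrable_coeFn g)
    rw [Real.dist_eq, ← integral_sub hf hg]
    have h1 : |∫ x, (v x * f x - v x * g x) ∂μ| ≤ ∫ x, |v x * (f x - g x)| ∂μ := by
      have := norm_integral_le_integral_norm (f := fun x => v x * (f x - g x)) (μ := μ)
      simp only [Real.norm_eq_abs] at this
      simpa [mul_sub] using this
    have h2 : ∫ x, |v x * (f x - g x)| ∂μ ≤ ∫ x, C * |f x - g x| ∂μ := by
      refine integral_mono_ae ((hfg.bdd_mul hv hb').abs) (hfg.abs.const_mul C) ?_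
      filter_upwards [hbound] with x hx
      rw [abs_mul]
      exact mul_le_mul_of_nonneg_right hx (abs_nonneg _)
    have h3 : ∫ x, C * |f x - g x| ∂μ = C * ∫ x, |f x - g x| ∂μ := integral_const_mul _ _
    have h4 : ∫ x, |f x - g x| ∂μ = dist f g := by
      rw [dist_eq_norm, L1.norm_eq_integral_norm]
      refine integral_congr_ae ?_
      filter_upwards [Lp.coeFn_sub f g] with x hx
      rw [hx]
      simp [Real.norm_eq_abs]
    calc |∫ x, (v x * f x - v x * g x) ∂μ| ≤ ∫ x, |v x * (f x - g x)| ∂μ := h1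
      _ ≤ ∫ x, C * |f x - g x| ∂μ := h2
      _ = C * dist f g := by rw [h3, h4]
  exact (LipschitzWith.of_dist_le_mul (K := ⟨C, hC0⟩) key).continuous

/-- If two a.e.-bounded measurable functions have the same integral against every indicator of
an `m₁`-measurable set, then they have the same integral against every integrable
`m₁`-strongly-measurable function. -/
lemma integral_mul_eq_of_forall_indicator (μ : Measure Ω) [IsFiniteMeasure μ]
    {m₁ : MeasurableSpace Ω} (hm₁ : m₁ ≤ mΩ)
    {v₁ v₂ : Ω → ℝ} (hv₁ : AEStronglyMeasurable[mΩ] v₁ μ) (hv₂ : AEStronglyMeasurable[mΩ] v₂ μ)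
    {C : ℝ} (hC0 : 0 ≤ C) (hC₁ : ∀ᵐ x ∂μ, |v₁ x| ≤ C) (hC₂ : ∀ᵐ x ∂μ, |v₂ x| ≤ C)
    (hbase : ∀ t : Set Ω, MeasurableSet[m₁] t →
      ∫ x, v₁ x * t.indicator (fun _ => (1 : ℝ)) x ∂μ
        = ∫ x, v₂ x * t.indicator (fun _ => (1 : ℝ)) x ∂μ)
    {f : Ω → ℝ} (hfm : StronglyMeasurable[m₁] f) (hfint : Integrable f μ) :
    ∫ x, v₁ x * f x ∂μ = ∫ x, v₂ x * f x ∂μ := by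
  letI : MeasurableSpace Ω := mΩ
  have hb₁ : ∀ᵐ x ∂μ, ‖v₁ x‖ ≤ C := by simpa [Real.norm_eq_abs] using hC₁
  have hb₂ : ∀ᵐ x ∂μ, ‖v₂ x‖ ≤ C := by simpa [Real.norm_eq_abs] using hC₂
  refine MemLp.induction_stronglyMeasurable hm₁ (p := 1) ENNReal.one_ne_top
    (fun f => ∫ x, v₁ x * f x ∂μ = ∫ x, v₂ x * f x ∂μ) ?_ ?_ ?_ ?_
    ((memLp_one_iff_integrable (μ := μ)).mpr hfint) hfm.aestronglyMeasurable
  · intro c t ht _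
    have h : ∀ x, t.indicator (fun _ => c) x = c * t.indicator (fun _ => (1 : ℝ)) x := by
      intro x; by_cases hx : x ∈ t <;> simp [hx]
    simp_rw [h, mul_left_comm _ c, integral_const_mul]
    rw [hbase t ht]
  · intro f g _ hf hg _ _ hPf hPg
    have hfi := (memLp_one_iff_integrable (μ := μ)).mp hf
    have hgi := (memLp_one_iff_integrable (μ := μ)).mp hg
    have h1 : Integrable (fun x => v₁ x * f x) μ := hfi.bdd_mul hv₁ hb₁
    have h2 : Integrable (fun x => v₁ x * g x) μ := hgi.bdd_mul hv₁ hb₁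
    have h3 : Integrable (fun x => v₂ x * f x) μ := hfi.bdd_mul hv₂ hb₂
    have h4 : Integrable (fun x => v₂ x * g x) μ := hgi.bdd_mul hv₂ hb₂
    simp_rw [Pi.add_apply, mul_add]
    rw [integral_add h1 h2, integral_add h3 h4, hPf, hPg]
  · exact isClosed_eq
      ((continuous_integral_mul_L1 μ hv₁ hC0 hC₁).comp continuous_subtype_val)
      ((continuous_integral_mul_L1 μ hv₂ hC0 hC₂).comp continuous_subtype_val)
  · intro f g hfg _ hPf
    have h1 : ∫ x, v₁ x * f x ∂μ = ∫ x, v₁ x * g x ∂μ :=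
      integral_congr_ae (hfg.mono fun x hx => by dsimp only; rw [hx])
    have h2 : ∫ x, v₂ x * f x ∂μ = ∫ x, v₂ x * g x ∂μ :=
      integral_congr_ae (hfg.mono fun x hx => by dsimp only; rw [hx])
    rw [← h1, ← h2]; exact hPf

/-- Pull-out identity at the level of integrals: for `m'`-strongly-measurable `v`,
`∫ v h = ∫ v E[h | m']`. -/
lemma integral_mul_eq_integral_mul_condexp (μ : Measure Ω) [IsFiniteMeasure μ]
    {m' : MeasurableSpace Ω} (hm' : m' ≤ mΩ)
    {v h : Ω → ℝ} (hv : StronglyMeasurable[m'] v)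
    (hvh : Integrable (fun x => v x * h x) μ) (hh : Integrable h μ) :
    ∫ x, v x * h x ∂μ = ∫ x, v x * (μ[h|m']) x ∂μ := by
  have hvh' : Integrable (v * h) μ := hvh
  have h1 : ∫ x, (v * h) x ∂μ = ∫ x, (μ[v * h|m']) x ∂μ :=
    (integral_condExp hm' (f := v * h)).symm
  have h2 : ∫ x, v x * h x ∂μ = ∫ x, (v * h) x ∂μ := rfl
  rw [h2, h1]
  exact integral_congr_ae (condExp_mul_of_stronglyMeasurable_left hv hvh' hh)

/-- **Core IPW identity.** -/
lemma ipw_core (μ : Measure Ω) [IsProbabilityMeasure μ]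
    {m' m₁ : MeasurableSpace Ω} (hm' : m' ≤ mΩ) (hm₁ : m₁ ≤ mΩ)
    {A : Set Ω} (hA : MeasurableSet[mΩ] A)
    {π : Ω → ℝ} (hπm : Measurable[m'] π)
    (hπq : π =ᵐ[μ] μ[A.indicator fun _ => (1 : ℝ)|m'])
    {c : ℝ} (hc : 0 < c) (hOverlap : ∀ᵐ ω ∂μ, c ≤ π ω)
    (hIndep : ∀ t : Set Ω, MeasurableSet[m₁] t →
      (μ[(t ∩ A).indicator fun _ => (1 : ℝ)|m']) =ᵐ[μ]
        fun ω => (μ[t.indicator fun _ => (1 : ℝ)|m']) ω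
          * (μ[A.indicator fun _ => (1 : ℝ)|m']) ω)
    {f : Ω → ℝ} (hfm : StronglyMeasurable[m₁] f) (hfint : Integrable f μ) :
    ∫ x, (π x)⁻¹ * A.indicator (fun _ => (1 : ℝ)) x * f x ∂μ = ∫ x, f x ∂μ := by
  letI : MeasurableSpace Ω := mΩ
  set q : Ω → ℝ := μ[A.indicator fun _ => (1 : ℝ)|m'] with hqdef
  have hqm : StronglyMeasurable[m'] q := stronglyMeasurable_condExp
  have hindint : Integrable (A.indicator fun _ => (1 : ℝ)) μ :=
    (integrable_const (1 : ℝ)).indicator hA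
  have hq0 : ∀ᵐ x ∂μ, 0 ≤ q x :=
    condExp_nonneg (Eventually.of_forall fun x => Set.indicator_nonneg (fun _ _ => zero_le_one) x)
  have hq1 : ∀ᵐ x ∂μ, q x ≤ 1 := by
    have hmono : (A.indicator fun _ => (1 : ℝ)) ≤ᵐ[μ] fun _ => (1 : ℝ) :=
      Eventually.of_forall fun x => by by_cases hx : x ∈ A <;> simp [Set.indicator_apply, hx]
    have h := condExp_mono (m := m') hindint (integrable_const 1) hmono
    rw [condExp_const hm'] at h
    exact h
  have hqabs : ∀ᵐ x ∂μ, |q x| ≤ 1 := by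
    filter_upwards [hq0, hq1] with x h0 h1
    rw [abs_of_nonneg h0]; exact h1
  set w : Ω → ℝ := fun ω => (π ω)⁻¹ with hwdef
  have hwm : StronglyMeasurable[m'] w := (hπm.inv).stronglyMeasurable
  have hwabs : ∀ᵐ x ∂μ, |w x| ≤ c⁻¹ := by
    filter_upwards [hOverlap] with x hx
    have hπx : 0 < π x := lt_of_lt_of_le hc hx
    rw [hwdef, abs_of_nonneg (inv_nonneg.mpr hπx.le)]
    exact inv_anti₀ hc hx
  set v₁ : Ω → ℝ := fun x => w x * A.indicator (fun _ => (1 : ℝ)) x with hv₁def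
  set v₂ : Ω → ℝ := fun x => w x * q x with hv₂def
  have hv₁m : AEStronglyMeasurable v₁ μ :=
    ((hwm.mono hm').mul (stronglyMeasurable_const.indicator hA)).aestronglyMeasurable
  have hv₂m : AEStronglyMeasurable v₂ μ :=
    ((hwm.mono hm').mul (hqm.mono hm')).aestronglyMeasurable
  have hindabs : ∀ x, |A.indicator (fun _ => (1 : ℝ)) x| ≤ 1 := by
    intro x; by_cases hx : x ∈ A <;> simp [Set.indicator_apply, hx]
  have hv₁b : ∀ᵐ x ∂μ, |v₁ x| ≤ c⁻¹ := by
    filter_upwards [hwabs] with x hx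
    calc |v₁ x| = |w x| * |A.indicator (fun _ => (1 : ℝ)) x| := abs_mul _ _
      _ ≤ c⁻¹ * 1 := mul_le_mul hx (hindabs x) (abs_nonneg _) (inv_nonneg.mpr hc.le)
      _ = c⁻¹ := mul_one _
  have hv₂b : ∀ᵐ x ∂μ, |v₂ x| ≤ c⁻¹ := by
    filter_upwards [hwabs, hqabs] with x hx hq
    calc |v₂ x| = |w x| * |q x| := abs_mul _ _
      _ ≤ c⁻¹ * 1 := mul_le_mul hx hq (abs_nonneg _) (inv_nonneg.mpr hc.le)
      _ = c⁻¹ := mul_one _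
  have hwnorm : ∀ᵐ x ∂μ, ‖w x‖ ≤ c⁻¹ := by simpa [Real.norm_eq_abs] using hwabs
  have hwqnorm : ∀ᵐ x ∂μ, ‖w x * q x‖ ≤ c⁻¹ := by
    filter_upwards [hv₂b] with x hx
    rw [Real.norm_eq_abs]
    exact hx
  have hbase : ∀ t : Set Ω, MeasurableSet[m₁] t →
      ∫ x, v₁ x * t.indicator (fun _ => (1 : ℝ)) x ∂μ
        = ∫ x, v₂ x * t.indicator (fun _ => (1 : ℝ)) x ∂μ := by
    intro t ht
    have htmeas : MeasurableSet[mΩ] t := hm₁ t ht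
    have htA : MeasurableSet[mΩ] (t ∩ A) := htmeas.inter hA
    have h1 : ∀ x, v₁ x * t.indicator (fun _ => (1 : ℝ)) x
        = w x * (t ∩ A).indicator (fun _ => (1 : ℝ)) x := by
      intro x
      by_cases hxA : x ∈ A <;> by_cases hxt : x ∈ t <;>
        simp [hv₁def, Set.indicator_apply, hxA, hxt]
    have hintA : Integrable ((t ∩ A).indicator fun _ => (1 : ℝ)) μ :=
      (integrable_const (1 : ℝ)).indicator htA
    have hintt : Integrable (t.indicator fun _ => (1 : ℝ)) μ :=
      (integrable_const (1 : ℝ)).indicator htmeas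
    have hwintA : Integrable (fun x => w x * (t ∩ A).indicator (fun _ => (1 : ℝ)) x) μ :=
      hintA.bdd_mul ((hwm.mono hm').aestronglyMeasurable) hwnorm
    have hwqt : Integrable (fun x => (w x * q x) * t.indicator (fun _ => (1 : ℝ)) x) μ :=
      hintt.bdd_mul (((hwm.mono hm').mul (hqm.mono hm')).aestronglyMeasurable) hwqnorm
    calc ∫ x, v₁ x * t.indicator (fun _ => (1 : ℝ)) x ∂μ
        = ∫ x, w x * (t ∩ A).indicator (fun _ => (1 : ℝ)) x ∂μ := by simp_rw [h1]
      _ = ∫ x, w x * (μ[(t ∩ A).indicator fun _ => (1 : ℝ)|m']) x ∂μ :=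
          integral_mul_eq_integral_mul_condexp μ hm' hwm hwintA hintA
      _ = ∫ x, w x * ((μ[t.indicator fun _ => (1 : ℝ)|m']) x * q x) ∂μ := by
          refine integral_congr_ae ?_
          filter_upwards [hIndep t ht] with x hx
          rw [hx]
      _ = ∫ x, (w x * q x) * (μ[t.indicator fun _ => (1 : ℝ)|m']) x ∂μ := by
          refine integral_congr_ae (Eventually.of_forall fun x => ?_)
          ring_nf
      _ = ∫ x, (w x * q x) * t.indicator (fun _ => (1 : ℝ)) x ∂μ :=
          (integral_mul_eq_integral_mul_condexp μ hm' (hwm.mul hqm) hwqt hintt).symm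
      _ = ∫ x, v₂ x * t.indicator (fun _ => (1 : ℝ)) x ∂μ := rfl
  have hmain : ∫ x, v₁ x * f x ∂μ = ∫ x, v₂ x * f x ∂μ :=
    integral_mul_eq_of_forall_indicator μ hm₁ hv₁m hv₂m (inv_nonneg.mpr hc.le)
      hv₁b hv₂b hbase hfm hfint
  have hRHS : ∫ x, v₂ x * f x ∂μ = ∫ x, f x ∂μ := by
    refine integral_congr_ae ?_
    filter_upwards [hOverlap, hπq] with ω h1 h2
    have hπpos : π ω ≠ 0 := (lt_of_lt_of_le hc h1).ne'
    show v₂ ω * f ω = f ω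
    have hv : v₂ ω = (π ω)⁻¹ * q ω := rfl
    rw [hv, ← h2, inv_mul_cancel₀ hπpos, one_mul]
  calc ∫ x, (π x)⁻¹ * A.indicator (fun _ => (1 : ℝ)) x * f x ∂μ
      = ∫ x, v₁ x * f x ∂μ := rfl
    _ = ∫ x, v₂ x * f x ∂μ := hmain
    _ = ∫ x, f x ∂μ := hRHS

end Aux

/-- Under unconfoundedness and overlap, for a fixed treatment level `d`
and fixed `β`, the inverse-probability-weighted expectation of the loss equals the
expectation of the loss of the potential outcome:
`E[ (D_d / π*_d(X)) · L(Y − β) ] = E[ L(Y*(d) − β) ]`. -/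
theorem ipw_identity
    {Ω : Type*} [MeasurableSpace Ω] [StandardBorelSpace Ω] [Nonempty Ω]
    (μ : Measure Ω) [IsProbabilityMeasure μ]
    {J : ℕ} (D : Ω → Fin (J + 1)) (hD : Measurable D)
    {p : ℕ} (X : Ω → (Fin p → ℝ)) (hX : Measurable X)
    (Ystar : Fin (J + 1) → Ω → ℝ) (hY : ∀ d, Measurable (Ystar d))
    -- unconfoundedness: `Y*(d) ⟂ D | σ(X)` for every treatment level `d`
    (hUnconf : ∀ d : Fin (J + 1),
      CondIndepFun (MeasurableSpace.comap X inferInstance) hX.comap_le (Ystar d) D μ)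
    -- the propensity scores `π*_d(X)`, as `σ(X)`-measurable versions of `P(D = d | X)`
    (π : Fin (J + 1) → Ω → ℝ)
    (hπmeas : ∀ d, Measurable[MeasurableSpace.comap X inferInstance] (π d))
    (hπ : ∀ d : Fin (J + 1), π d =ᵐ[μ]
      μ[(fun ω => if D ω = d then (1 : ℝ) else 0) | MeasurableSpace.comap X inferInstance])
    -- overlap
    (c cbar : ℝ) (hc : 0 < c) (hcbar : cbar < 1)
    (hOverlap : ∀ d : Fin (J + 1), ∀ᵐ ω ∂μ, π d ω ∈ Set.Icc c cbar)
    -- convex loss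
    (L : ℝ → ℝ) (hL : ConvexOn ℝ Set.univ L)
    (d : Fin (J + 1)) (β : ℝ)
    (hint : Integrable (fun ω => L (Ystar d ω - β)) μ) :
    ∫ ω, (if D ω = d then (1 : ℝ) else 0) / π d ω * L (Ystar (D ω) ω - β) ∂μ
      = ∫ ω, L (Ystar d ω - β) ∂μ := by
  classical
  have hA : MeasurableSet (D ⁻¹' {d}) := hD (measurableSet_singleton d)
  have hLc : Continuous L := by
    rw [← continuousOn_univ]
    exact hL.continuousOn isOpen_univ
  have hYm₁ : Measurable[MeasurableSpace.comap (Ystar d) inferInstance] (Ystar d) :=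
    fun s hs => ⟨s, hs, rfl⟩
  have hfm : StronglyMeasurable[MeasurableSpace.comap (Ystar d) inferInstance]
      (fun ω => L (Ystar d ω - β)) :=
    ((hLc.measurable.comp (measurable_id.sub measurable_const)).comp hYm₁).stronglyMeasurable
  have hind : (fun ω => if D ω = d then (1 : ℝ) else 0)
      = (D ⁻¹' {d}).indicator fun _ => (1 : ℝ) := by
    funext ω
    by_cases h : D ω = d <;> simp [Set.indicator_apply, h]
  have hπq : π d =ᵐ[μ]
      μ[(D ⁻¹' {d}).indicator fun _ => (1 : ℝ)|MeasurableSpace.comap X inferInstance] := by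
    rw [← hind]; exact hπ d
  have hCI := (condIndepFun_iff_condExp_inter_preimage_eq_mul (hY d) hD).mp (hUnconf d)
  have hIndep : ∀ t : Set Ω, MeasurableSet[MeasurableSpace.comap (Ystar d) inferInstance] t →
      (μ[(t ∩ D ⁻¹' {d}).indicator fun _ => (1 : ℝ)|MeasurableSpace.comap X inferInstance]) =ᵐ[μ]
        fun ω => (μ[t.indicator fun _ => (1 : ℝ)|MeasurableSpace.comap X inferInstance]) ω
          * (μ[(D ⁻¹' {d}).indicator fun _ => (1 : ℝ)|MeasurableSpace.comap X inferInstance]) ω := by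
    rintro t ⟨s, hs, rfl⟩
    exact hCI s {d} hs (measurableSet_singleton d)
  have hcore := ipw_core μ hX.comap_le (hY d).comap_le hA (hπmeas d) hπq hc
    ((hOverlap d).mono fun ω h => h.1) hIndep hfm hint
  rw [← hcore]
  refine integral_congr_ae (Eventually.of_forall fun ω => ?_)
  by_cases h : D ω = d
  · simp [Set.indicator_apply, h, div_eq_mul_inv, mul_comm]
  · simp [Set.indicator_apply, h]
end

section
/- Suppose the unconfoundedness assumption and the overlap assumption hold, and suppose L(Y*(d) − β) is integrable for every β in a compact set Θ_d ⊂ ℝ and every d ∈ {0,1,...,J}. Then β* = (β*_0,...,β*_J) minimizes Σ_{d=0}^{J} E[L(Y*(d) − β_d)] over (β_0,...,β_J) ∈ Θ_0 × ⋯ × Θ_J if and only if β* minimizes the inverse-probability-weighted objective Σ_{d=0}^{J} E[ (D_d / π*_d(X)) · L(Y − β_d) ] over the same set; in fact the two objective functions are identical on Θ_0 × ⋯ × Θ_J. -/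
open MeasureTheory ProbabilityTheory Filter

section AuxIPW

open scoped ENNReal NNReal

variable {Ω : Type*} {m : MeasurableSpace Ω} [mΩ : MeasurableSpace Ω] [StandardBorelSpace Ω]
  {μ : Measure Ω} [IsProbabilityMeasure μ] (hm : m ≤ mΩ)

set_option maxHeartbeats 1000000 in
set_option synthInstance.maxHeartbeats 200000 in
/-- Product rule for conditional expectation under conditional independence,
specialized to an indicator of the second variable. -/
lemma condexp_mul_indicator_of_condIndepFun
    {Y : Ω → ℝ} (hY : Measurable Y)
    {J : ℕ} {D : Ω → Fin (J + 1)} (hD : Measurable D) (d : Fin (J + 1))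
    (hInd : CondIndepFun m hm Y D μ)
    {φ : ℝ → ℝ} (hφ : Integrable φ (@Measure.map Ω ℝ mΩ _ Y μ)) :
    μ[(fun ω => φ (Y ω) * (if D ω = d then (1 : ℝ) else 0)) | m]
      =ᵐ[μ] fun ω => (μ[(fun ω => if D ω = d then (1 : ℝ) else 0) | m]) ω
        * (μ[(fun ω => φ (Y ω)) | m]) ω := by
  set ν : Measure ℝ := @Measure.map Ω ℝ mΩ _ Y μ with hν_def
  set g : Ω → ℝ := fun ω => if D ω = d then (1 : ℝ) else 0 with hg_def
  have hg_eq : g = (D ⁻¹' {d}).indicator (fun _ => (1 : ℝ)) := by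
    funext ω; by_cases h : D ω = d <;> simp [hg_def, Set.indicator_apply, h]
  have hfac := (condIndepFun_iff_condExp_inter_preimage_eq_mul (m' := m) (hm' := hm)
    (μ := μ) hY hD).mp hInd
  -- the predicate for the induction
  set P : (ℝ → ℝ) → Prop := fun ψ =>
    μ[(fun ω => ψ (Y ω) * g ω) | m]
      =ᵐ[μ] fun ω => (μ[g | m]) ω * (μ[(fun ω => ψ (Y ω)) | m]) ω with hP_def
  have main : ∀ ⦃ψ : ℝ → ℝ⦄, Integrable ψ ν → P ψ := by
    refine Integrable.induction P ?_ ?_ ?_ ?_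
    · -- indicator case
      intro c0 s hs hμs
      have h1 : (fun ω => (s.indicator fun _ => c0) (Y ω) * g ω)
          = c0 • ((Y ⁻¹' s ∩ D ⁻¹' {d}).indicator fun _ => (1 : ℝ)) := by
        funext ω
        by_cases h : Y ω ∈ s <;> by_cases h' : D ω = d <;>
          simp [hg_def, Set.indicator_apply, h, h']
      have h2 : (fun ω => (s.indicator fun _ => c0) (Y ω))
          = c0 • ((Y ⁻¹' s).indicator fun _ => (1 : ℝ)) := by
        funext ω
        by_cases h : Y ω ∈ s <;> simp [Set.indicator_apply, h]
      rw [hP_def]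
      simp only [h1, h2]
      calc μ[c0 • ((Y ⁻¹' s ∩ D ⁻¹' {d}).indicator fun _ => (1 : ℝ)) | m]
          =ᵐ[μ] c0 • μ[((Y ⁻¹' s ∩ D ⁻¹' {d}).indicator fun _ => (1 : ℝ)) | m] :=
            condExp_smul c0 _ _
        _ =ᵐ[μ] fun ω => (μ[g|m]) ω * (c0 • μ[((Y ⁻¹' s).indicator fun _ => (1 : ℝ))|m]) ω := by
            rw [hg_eq]
            filter_upwards [hfac s {d} hs (measurableSet_singleton d)] with ω hω
            simp only [Pi.smul_apply, smul_eq_mul, hω]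
            ring
        _ =ᵐ[μ] fun ω => (μ[g|m]) ω * (μ[c0 • ((Y ⁻¹' s).indicator fun _ => (1 : ℝ))|m]) ω := by
            filter_upwards [condExp_smul (μ := μ) (m := m) c0
              ((Y ⁻¹' s).indicator fun _ => (1 : ℝ))] with ω hω
            rw [hω]
    · -- additivity
      intro ψ₁ ψ₂ _ h₁ h₂ hP₁ hP₂
      have hi₁ : Integrable (fun ω => ψ₁ (Y ω)) μ :=
        (integrable_map_measure h₁.aestronglyMeasurable hY.aemeasurable).mp h₁
      have hi₂ : Integrable (fun ω => ψ₂ (Y ω)) μ :=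
        (integrable_map_measure h₂.aestronglyMeasurable hY.aemeasurable).mp h₂
      have hgb : ∀ ω, ‖g ω‖ ≤ 1 := by
        intro ω; by_cases h : D ω = d <;> simp [hg_def, h]
      have hgm : AEStronglyMeasurable g μ := by
        rw [hg_eq]
        exact ((measurable_const.indicator (hD (measurableSet_singleton d)))).aestronglyMeasurable
      have hig₁ : Integrable (fun ω => ψ₁ (Y ω) * g ω) μ :=
        (hi₁.bdd_mul hgm (Eventually.of_forall hgb)).congr
          (Eventually.of_forall fun ω => mul_comm _ _)
      have hig₂ : Integrable (fun ω => ψ₂ (Y ω) * g ω) μ :=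
        (hi₂.bdd_mul hgm (Eventually.of_forall hgb)).congr
          (Eventually.of_forall fun ω => mul_comm _ _)
      have e1 : (fun ω => (ψ₁ + ψ₂) (Y ω) * g ω)
          = (fun ω => ψ₁ (Y ω) * g ω) + fun ω => ψ₂ (Y ω) * g ω := by
        funext ω; simp [add_mul]
      have e2 : (fun ω => (ψ₁ + ψ₂) (Y ω))
          = (fun ω => ψ₁ (Y ω)) + fun ω => ψ₂ (Y ω) := by
        funext ω; simp
      rw [hP_def]
      simp only [e1, e2]
      filter_upwards [condExp_add hig₁ hig₂ m, condExp_add hi₁ hi₂ m, hP₁, hP₂] with ω hA hB h1 h2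
      simp only [Pi.add_apply] at hA hB ⊢
      rw [hA, hB, h1, h2]; ring
    · -- closedness in L¹
      refine IsSeqClosed.isClosed ?_
      intro x a hx hxa
      set F : ℝ → ℝ := ⇑a with hF_def
      have hFi : Integrable F ν := L1.integrable_coeFn a
      have hFY : Integrable (fun ω => F (Y ω)) μ :=
        (integrable_map_measure hFi.aestronglyMeasurable hY.aemeasurable).mp hFi
      -- notation
      set A : Ω → ℝ := μ[(fun ω => F (Y ω) * g ω) | m] with hA_def
      set B : Ω → ℝ := fun ω => (μ[g|m]) ω * (μ[(fun ω => F (Y ω))|m]) ω with hB_def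
      have hgb : ∀ ω, ‖g ω‖ ≤ 1 := by
        intro ω; by_cases h : D ω = d <;> simp [hg_def, h]
      have hgm : AEStronglyMeasurable g μ := by
        rw [hg_eq]
        exact ((measurable_const.indicator (hD (measurableSet_singleton d)))).aestronglyMeasurable
      have hgi : Integrable g μ := by
        refine (integrable_const (1 : ℝ)).mono' hgm (Eventually.of_forall hgb)
      have hπb : ∀ᵐ ω ∂μ, |(μ[g|m]) ω| ≤ (1 : ℝ≥0) := by
        refine ae_bdd_condExp_of_ae_bdd ?_
        exact Eventually.of_forall fun ω => by simpa using hgb ω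
      -- distance control
      set δ : ℕ → ℝ≥0∞ := fun n => eLpNorm (fun y => (x n : ℝ → ℝ) y - F y) 1 ν
        with hδ_def
      have key : ∀ n, eLpNorm (fun ω => A ω - B ω) 1 μ ≤ δ n + δ n := by
        intro n
        set Fn : ℝ → ℝ := ⇑(x n) with hFn_def
        have hFni : Integrable Fn ν := L1.integrable_coeFn (x n)
        have hFnY : Integrable (fun ω => Fn (Y ω)) μ :=
          (integrable_map_measure hFni.aestronglyMeasurable hY.aemeasurable).mp hFni
        have hFg : Integrable (fun ω => F (Y ω) * g ω) μ :=
          (hFY.bdd_mul hgm (Eventually.of_forall hgb)).congr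
            (Eventually.of_forall fun ω => mul_comm _ _)
        have hFng : Integrable (fun ω => Fn (Y ω) * g ω) μ :=
          (hFnY.bdd_mul hgm (Eventually.of_forall hgb)).congr
            (Eventually.of_forall fun ω => mul_comm _ _)
        set An : Ω → ℝ := μ[(fun ω => Fn (Y ω) * g ω) | m] with hAn_def
        set Bn : Ω → ℝ := fun ω => (μ[g|m]) ω * (μ[(fun ω => Fn (Y ω))|m]) ω with hBn_def
        have hmap : eLpNorm (fun y => Fn y - F y) 1 ν
            = eLpNorm ((fun y => Fn y - F y) ∘ Y) 1 μ :=
          eLpNorm_map_measure (hFni.aestronglyMeasurable.sub hFi.aestronglyMeasurable)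
            hY.aemeasurable
        have hdiffY : eLpNorm (fun ω => F (Y ω) - Fn (Y ω)) 1 μ = δ n := by
          calc eLpNorm (fun ω => F (Y ω) - Fn (Y ω)) 1 μ
              = eLpNorm (fun ω => Fn (Y ω) - F (Y ω)) 1 μ := by
                rw [show (fun ω => F (Y ω) - Fn (Y ω)) = -(fun ω => Fn (Y ω) - F (Y ω)) from
                  by funext ω; simp, eLpNorm_neg]
            _ = eLpNorm ((fun y => Fn y - F y) ∘ Y) 1 μ := rfl
            _ = eLpNorm (fun y => Fn y - F y) 1 ν := hmap.symm
            _ = δ n := rfl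
        have h1 : eLpNorm (fun ω => A ω - An ω) 1 μ ≤ δ n := by
          have e : (fun ω => A ω - An ω)
              =ᵐ[μ] μ[(fun ω => F (Y ω) * g ω) - (fun ω => Fn (Y ω) * g ω) | m] :=
            (condExp_sub hFg hFng m).symm
          calc eLpNorm (fun ω => A ω - An ω) 1 μ
              = eLpNorm (μ[(fun ω => F (Y ω) * g ω) - (fun ω => Fn (Y ω) * g ω) | m]) 1 μ :=
                eLpNorm_congr_ae e
            _ ≤ eLpNorm ((fun ω => F (Y ω) * g ω) - fun ω => Fn (Y ω) * g ω) 1 μ :=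
                eLpNorm_one_condExp_le_eLpNorm _
            _ ≤ eLpNorm (fun ω => F (Y ω) - Fn (Y ω)) 1 μ := by
                refine eLpNorm_mono fun ω => ?_
                simp only [Pi.sub_apply]
                rw [← sub_mul]
                calc ‖(F (Y ω) - Fn (Y ω)) * g ω‖
                    = ‖F (Y ω) - Fn (Y ω)‖ * ‖g ω‖ := norm_mul _ _
                  _ ≤ ‖F (Y ω) - Fn (Y ω)‖ * 1 :=
                      mul_le_mul_of_nonneg_left (hgb ω) (norm_nonneg _)
                  _ = ‖F (Y ω) - Fn (Y ω)‖ := mul_one _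
            _ = δ n := hdiffY
        have h2 : eLpNorm (fun ω => Bn ω - B ω) 1 μ ≤ δ n := by
          calc eLpNorm (fun ω => Bn ω - B ω) 1 μ
              ≤ eLpNorm (μ[(fun ω => Fn (Y ω)) - (fun ω => F (Y ω)) | m]) 1 μ := by
                refine eLpNorm_mono_ae ?_
                filter_upwards [hπb, condExp_sub hFnY hFY m] with ω hb he
                rw [he, Pi.sub_apply]
                simp only [hBn_def, hB_def]
                rw [← mul_sub, norm_mul]
                have hb1 : ‖(μ[g|m]) ω‖ ≤ 1 := by
                  rw [Real.norm_eq_abs]; exact_mod_cast hb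
                exact mul_le_of_le_one_left (norm_nonneg _) hb1
            _ ≤ eLpNorm ((fun ω => Fn (Y ω)) - fun ω => F (Y ω)) 1 μ :=
                eLpNorm_one_condExp_le_eLpNorm _
            _ ≤ δ n := by
                rw [← hdiffY, ← eLpNorm_neg]
                refine le_of_eq (eLpNorm_congr_ae (Eventually.of_forall fun ω => ?_))
                simp
        have hABsm : AEStronglyMeasurable (fun ω => A ω - B ω) μ := by
          refine AEStronglyMeasurable.sub ?_ ?_
          · exact (stronglyMeasurable_condExp.mono hm).aestronglyMeasurable
          · exact ((stronglyMeasurable_condExp.mono hm).aestronglyMeasurable.mul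
              (stronglyMeasurable_condExp.mono hm).aestronglyMeasurable)
        have hAsm : AEStronglyMeasurable (fun ω => A ω - An ω) μ :=
          (stronglyMeasurable_condExp.mono hm).aestronglyMeasurable.sub
            (stronglyMeasurable_condExp.mono hm).aestronglyMeasurable
        have hBsm : AEStronglyMeasurable (fun ω => Bn ω - B ω) μ :=
          (((stronglyMeasurable_condExp.mono hm).aestronglyMeasurable.mul
            (stronglyMeasurable_condExp.mono hm).aestronglyMeasurable)).sub
            (((stronglyMeasurable_condExp.mono hm).aestronglyMeasurable.mul
            (stronglyMeasurable_condExp.mono hm).aestronglyMeasurable))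
        have hABn : An =ᵐ[μ] Bn := hx n
        have hsplit : (fun ω => A ω - B ω)
            =ᵐ[μ] (fun ω => A ω - An ω) + fun ω => Bn ω - B ω := by
          filter_upwards [hABn] with ω hω
          simp only [Pi.add_apply]
          rw [hω]
          ring
        calc eLpNorm (fun ω => A ω - B ω) 1 μ
            = eLpNorm ((fun ω => A ω - An ω) + fun ω => Bn ω - B ω) 1 μ :=
              eLpNorm_congr_ae hsplit
          _ ≤ eLpNorm (fun ω => A ω - An ω) 1 μ + eLpNorm (fun ω => Bn ω - B ω) 1 μ :=
              eLpNorm_add_le hAsm hBsm le_rfl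
          _ ≤ δ n + δ n := add_le_add h1 h2
      -- δ n → 0
      have hδ0 : Tendsto δ atTop (nhds 0) := by
        have hnorm : Tendsto (fun n => ‖x n - a‖) atTop (nhds 0) :=
          tendsto_iff_norm_sub_tendsto_zero.mp hxa
        have hδ_eq : ∀ n, δ n = ENNReal.ofReal ‖x n - a‖ := by
          intro n
          show eLpNorm (fun y => (x n : ℝ → ℝ) y - F y) 1 ν = _
          have h1 : eLpNorm (fun y => (x n : ℝ → ℝ) y - F y) 1 ν
              = eLpNorm (⇑(x n - a)) 1 ν := by
            refine eLpNorm_congr_ae ?_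
            filter_upwards [Lp.coeFn_sub (x n) a] with y hy
            rw [hy]; simp [hF_def]
          rw [h1, Lp.norm_def, ENNReal.ofReal_toReal (Lp.eLpNorm_ne_top _)]
        have hfe : δ = fun n => ENNReal.ofReal ‖x n - a‖ := funext hδ_eq
        rw [hfe, show (0 : ℝ≥0∞) = ENNReal.ofReal 0 by simp]
        exact (ENNReal.continuous_ofReal.tendsto 0).comp hnorm
      have h0 : eLpNorm (fun ω => A ω - B ω) 1 μ = 0 := by
        have hle : eLpNorm (fun ω => A ω - B ω) 1 μ ≤ 0 := by
          refine ge_of_tendsto' (f := fun n => δ n + δ n) (by simpa using hδ0.add hδ0) key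
        exact le_antisymm hle (zero_le')
      have hABsm : AEStronglyMeasurable (fun ω => A ω - B ω) μ :=
        (stronglyMeasurable_condExp.mono hm).aestronglyMeasurable.sub
          ((stronglyMeasurable_condExp.mono hm).aestronglyMeasurable.mul
            (stronglyMeasurable_condExp.mono hm).aestronglyMeasurable)
      have hAB := (eLpNorm_eq_zero_iff hABsm one_ne_zero).mp h0
      rw [Set.mem_setOf_eq, hP_def]
      filter_upwards [hAB] with ω hω
      have : A ω - B ω = 0 := hω
      rw [hA_def] at this
      have := sub_eq_zero.mp this
      exact this
    · -- a.e. congruence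
      intro ψ ψ' hψψ' hψ hPψ
      have hYae : (fun ω => ψ (Y ω)) =ᵐ[μ] fun ω => ψ' (Y ω) :=
        ae_of_ae_map hY.aemeasurable hψψ'
      have hYae' : (fun ω => ψ (Y ω) * g ω) =ᵐ[μ] fun ω => ψ' (Y ω) * g ω := by
        filter_upwards [hYae] with ω hω; rw [hω]
      rw [hP_def]
      calc μ[(fun ω => ψ' (Y ω) * g ω)|m]
          =ᵐ[μ] μ[(fun ω => ψ (Y ω) * g ω)|m] := condExp_congr_ae hYae'.symm
        _ =ᵐ[μ] fun ω => (μ[g|m]) ω * (μ[(fun ω => ψ (Y ω))|m]) ω := hPψ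
        _ =ᵐ[μ] fun ω => (μ[g|m]) ω * (μ[(fun ω => ψ' (Y ω))|m]) ω := by
            filter_upwards [condExp_congr_ae (m := m) hYae] with ω hω
            rw [hω]
  exact main hφ

/-- The IPW integral identity: under conditional independence, overlap and a propensity score,
the weighted expectation of `φ(Y)` on `{D = d}` equals the unweighted expectation. -/
lemma ipw_integral_eq
    {Y : Ω → ℝ} (hY : Measurable Y)
    {J : ℕ} {D : Ω → Fin (J + 1)} (hD : Measurable D) (d : Fin (J + 1))
    (hInd : CondIndepFun m hm Y D μ)
    {π : Ω → ℝ} (hπm : Measurable[m] π)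
    (hπ : π =ᵐ[μ] μ[(fun ω => if D ω = d then (1 : ℝ) else 0) | m])
    {c cbar : ℝ} (hc : 0 < c) (hOv : ∀ᵐ ω ∂μ, π ω ∈ Set.Icc c cbar)
    {φ : ℝ → ℝ} (hφc : Continuous φ)
    (hφint : Integrable (fun ω => φ (Y ω)) μ) :
    ∫ ω, (if D ω = d then (1 : ℝ) else 0) / π ω * φ (Y ω) ∂μ = ∫ ω, φ (Y ω) ∂μ := by
  haveI : SigmaFinite (μ.trim hm) := by
    have : IsFiniteMeasure (μ.trim hm) := by
      constructor
      rw [trim_measurableSet_eq hm MeasurableSet.univ]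
      exact measure_lt_top μ Set.univ
    infer_instance
  set g : Ω → ℝ := fun ω => if D ω = d then (1 : ℝ) else 0 with hg_def
  have hφν : Integrable φ (@Measure.map Ω ℝ mΩ _ Y μ) :=
    (integrable_map_measure hφc.aestronglyMeasurable hY.aemeasurable).mpr hφint
  have hprod := condexp_mul_indicator_of_condIndepFun hm hY hD d hInd hφν
  set q : Ω → ℝ := fun ω => (π ω)⁻¹ with hq_def
  have hqm : StronglyMeasurable[m] q := (Measurable.stronglyMeasurable hπm.inv)
  have hqb : ∀ᵐ ω ∂μ, ‖q ω‖ ≤ c⁻¹ := by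
    filter_upwards [hOv] with ω h
    have h1 : 0 < π ω := lt_of_lt_of_le hc h.1
    rw [hq_def, Real.norm_eq_abs, abs_of_pos (inv_pos.mpr h1)]
    exact inv_anti₀ hc h.1
  have hgb : ∀ ω, ‖g ω‖ ≤ 1 := by
    intro ω; by_cases h : D ω = d <;> simp [hg_def, h]
  have hgm : AEStronglyMeasurable g μ := by
    have : g = (D ⁻¹' {d}).indicator (fun _ => (1 : ℝ)) := by
      funext ω; by_cases h : D ω = d <;> simp [hg_def, Set.indicator_apply, h]
    rw [this]
    exact (measurable_const.indicator (hD (measurableSet_singleton d))).aestronglyMeasurable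
  have hFg : Integrable (fun ω => φ (Y ω) * g ω) μ :=
    (hφint.bdd_mul hgm (Eventually.of_forall hgb)).congr
      (Eventually.of_forall fun ω => mul_comm _ _)
  have hqFg : Integrable (q * fun ω => φ (Y ω) * g ω) μ :=
    hFg.bdd_mul (hqm.mono hm).aestronglyMeasurable hqb
  have hpull : μ[q * (fun ω => φ (Y ω) * g ω) | m]
      =ᵐ[μ] q * μ[(fun ω => φ (Y ω) * g ω) | m] :=
    condExp_stronglyMeasurable_mul_of_bound hm hqm hFg c⁻¹ hqb
  have heq1 : (fun ω => g ω / π ω * φ (Y ω)) = fun ω => (q * fun ω => φ (Y ω) * g ω) ω := by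
    funext ω
    simp only [Pi.mul_apply, hq_def, div_eq_mul_inv]
    ring
  calc ∫ ω, g ω / π ω * φ (Y ω) ∂μ
      = ∫ ω, (q * fun ω => φ (Y ω) * g ω) ω ∂μ := by rw [heq1]
    _ = ∫ ω, (μ[q * (fun ω => φ (Y ω) * g ω) | m]) ω ∂μ := (integral_condExp hm).symm
    _ = ∫ ω, (μ[(fun ω => φ (Y ω)) | m]) ω ∂μ := by
        refine integral_congr_ae ?_
        filter_upwards [hpull, hprod, hπ, hOv] with ω h1 h2 h3 h4
        rw [h1, Pi.mul_apply, h2, ← h3, hq_def, ← mul_assoc,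
          inv_mul_cancel₀ (ne_of_gt (lt_of_lt_of_le hc h4.1)), one_mul]
    _ = ∫ ω, φ (Y ω) ∂μ := integral_condExp hm

end AuxIPW

/-- Under unconfoundedness and overlap, with `L(Y*(d) − β)` integrable for all
`β` in compact sets `Θ_d`, the population objective `Σ_d E[L(Y*(d) − β_d)]` and the
inverse-probability-weighted objective `Σ_d E[(D_d/π*_d(X)) L(Y − β_d)]` are identical on
`Θ_0 × ⋯ × Θ_J`; in particular `β*` minimizes the former iff it minimizes the latter. -/
theorem ipw_objective_identity
    {Ω : Type*} [MeasurableSpace Ω] [StandardBorelSpace Ω] [Nonempty Ω]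
    (μ : Measure Ω) [IsProbabilityMeasure μ]
    {J : ℕ} (D : Ω → Fin (J + 1)) (hD : Measurable D)
    {p : ℕ} (X : Ω → (Fin p → ℝ)) (hX : Measurable X)
    (Ystar : Fin (J + 1) → Ω → ℝ) (hY : ∀ d, Measurable (Ystar d))
    -- unconfoundedness
    (hUnconf : ∀ d : Fin (J + 1),
      CondIndepFun (MeasurableSpace.comap X inferInstance) hX.comap_le (Ystar d) D μ)
    -- propensity scores
    (π : Fin (J + 1) → Ω → ℝ)
    (hπmeas : ∀ d, Measurable[MeasurableSpace.comap X inferInstance] (π d))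
    (hπ : ∀ d : Fin (J + 1), π d =ᵐ[μ]
      μ[(fun ω => if D ω = d then (1 : ℝ) else 0) | MeasurableSpace.comap X inferInstance])
    -- overlap
    (c cbar : ℝ) (hc : 0 < c) (hcbar : cbar < 1)
    (hOverlap : ∀ d : Fin (J + 1), ∀ᵐ ω ∂μ, π d ω ∈ Set.Icc c cbar)
    -- convex loss
    (L : ℝ → ℝ) (hL : ConvexOn ℝ Set.univ L)
    -- compact parameter sets and integrability over them
    (Θ : Fin (J + 1) → Set ℝ) (hΘ : ∀ d, IsCompact (Θ d))
    (hint : ∀ d : Fin (J + 1), ∀ β ∈ Θ d, Integrable (fun ω => L (Ystar d ω - β)) μ)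
    (βstar : Fin (J + 1) → ℝ) (hβstar : ∀ d, βstar d ∈ Θ d) :
    (∀ b : Fin (J + 1) → ℝ, (∀ d, b d ∈ Θ d) →
        ∑ d : Fin (J + 1), ∫ ω, L (Ystar d ω - b d) ∂μ
          = ∑ d : Fin (J + 1),
              ∫ ω, (if D ω = d then (1 : ℝ) else 0) / π d ω * L (Ystar (D ω) ω - b d) ∂μ) ∧
    ((∀ b : Fin (J + 1) → ℝ, (∀ d, b d ∈ Θ d) →
        ∑ d : Fin (J + 1), ∫ ω, L (Ystar d ω - βstar d) ∂μ
          ≤ ∑ d : Fin (J + 1), ∫ ω, L (Ystar d ω - b d) ∂μ)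
      ↔ (∀ b : Fin (J + 1) → ℝ, (∀ d, b d ∈ Θ d) →
        ∑ d : Fin (J + 1),
            ∫ ω, (if D ω = d then (1 : ℝ) else 0) / π d ω * L (Ystar (D ω) ω - βstar d) ∂μ
          ≤ ∑ d : Fin (J + 1),
            ∫ ω, (if D ω = d then (1 : ℝ) else 0) / π d ω * L (Ystar (D ω) ω - b d) ∂μ)) := by
  have hLc : Continuous L := by
    have := hL.continuousOn isOpen_univ
    rwa [← continuousOn_univ]
  have key : ∀ (d : Fin (J + 1)) (b : ℝ), b ∈ Θ d →
      ∫ ω, (if D ω = d then (1 : ℝ) else 0) / π d ω * L (Ystar (D ω) ω - b) ∂μ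
        = ∫ ω, L (Ystar d ω - b) ∂μ := by
    intro d b hb
    have h1 : ∀ ω, (if D ω = d then (1 : ℝ) else 0) / π d ω * L (Ystar (D ω) ω - b)
        = (if D ω = d then (1 : ℝ) else 0) / π d ω * L (Ystar d ω - b) := by
      intro ω
      by_cases h : D ω = d
      · rw [h]
      · simp [h]
    rw [integral_congr_ae (Eventually.of_forall h1)]
    exact ipw_integral_eq hX.comap_le (hY d) hD d (hUnconf d) (hπmeas d) (hπ d) hc
      (hOverlap d) (hLc.comp (continuous_id.sub continuous_const)) (hint d b hb)
  have hid : ∀ b : Fin (J + 1) → ℝ, (∀ d, b d ∈ Θ d) →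
      ∑ d : Fin (J + 1), ∫ ω, L (Ystar d ω - b d) ∂μ
        = ∑ d : Fin (J + 1),
            ∫ ω, (if D ω = d then (1 : ℝ) else 0) / π d ω * L (Ystar (D ω) ω - b d) ∂μ := by
    intro b hb
    exact Finset.sum_congr rfl fun d _ => (key d (b d) (hb d)).symm
  refine ⟨hid, ?_⟩
  constructor
  · intro h b hb
    rw [← hid b hb, ← hid βstar hβstar]
    exact h b hb
  · intro h b hb
    rw [hid b hb, hid βstar hβstar]
    exact h b hb
end

section
/- Suppose the unconfoundedness assumption and the overlap assumption hold, Y is integrable, and let g*_d(X) be a σ(X)-measurable random variable satisfying g*_d(X) · π*_d(X) = E[ D_d · Y | σ(X) ] almost surely (i.e., g*_d(x) = E[Y | X = x, D = d] is the outcome regression function). Then E[ Y*(d) ] = E[ g*_d(X) ] for every d ∈ {0,1,...,J}. -/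
open MeasureTheory ProbabilityTheory Filter
open scoped ENNReal NNReal

/-- Under unconfoundedness and overlap, if `Y` is integrable and
`g*_d(X)` is a `σ(X)`-measurable random variable with
`g*_d(X) · π*_d(X) = E[D_d · Y | σ(X)]` a.s. (the outcome regression function), then
`E[Y*(d)] = E[g*_d(X)]` for every `d`. -/
theorem outcome_regression_identity
    {Ω : Type*} [MeasurableSpace Ω] [StandardBorelSpace Ω] [Nonempty Ω]
    (μ : Measure Ω) [IsProbabilityMeasure μ]
    {J : ℕ} (D : Ω → Fin (J + 1)) (hD : Measurable D)
    {p : ℕ} (X : Ω → (Fin p → ℝ)) (hX : Measurable X)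
    (Ystar : Fin (J + 1) → Ω → ℝ) (hY : ∀ d, Measurable (Ystar d))
    -- unconfoundedness
    (hUnconf : ∀ d : Fin (J + 1),
      CondIndepFun (MeasurableSpace.comap X inferInstance) hX.comap_le (Ystar d) D μ)
    -- propensity scores
    (π : Fin (J + 1) → Ω → ℝ)
    (hπmeas : ∀ d, Measurable[MeasurableSpace.comap X inferInstance] (π d))
    (hπ : ∀ d : Fin (J + 1), π d =ᵐ[μ]
      μ[(fun ω => if D ω = d then (1 : ℝ) else 0) | MeasurableSpace.comap X inferInstance])
    -- overlap
    (c cbar : ℝ) (hc : 0 < c) (hcbar : cbar < 1)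
    (hOverlap : ∀ d : Fin (J + 1), ∀ᵐ ω ∂μ, π d ω ∈ Set.Icc c cbar)
    -- the observed outcome `Y = Y*(D)` is integrable
    (hYint : Integrable (fun ω => Ystar (D ω) ω) μ)
    -- outcome regression functions `g*_d(X)`
    (G : Fin (J + 1) → Ω → ℝ)
    (hGmeas : ∀ d, Measurable[MeasurableSpace.comap X inferInstance] (G d))
    (hG : ∀ d : Fin (J + 1), (fun ω => G d ω * π d ω) =ᵐ[μ]
      μ[(fun ω => (if D ω = d then (1 : ℝ) else 0) * Ystar (D ω) ω) |
        MeasurableSpace.comap X inferInstance]) :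
    ∀ d : Fin (J + 1), ∫ ω, Ystar d ω ∂μ = ∫ ω, G d ω ∂μ := by
  intro d
  rename_i mΩ _sb _ne _ip
  set m : MeasurableSpace Ω := MeasurableSpace.comap X inferInstance with hm_def
  letI : MeasurableSpace Ω := mΩ
  have hm : m ≤ mΩ := hX.comap_le
  haveI : SigmaFinite (μ.trim hm) :=
    (isFiniteMeasure_trim hm).toSigmaFinite
  set f : Ω → ℝ := Ystar d with hf_def
  have hfmeas : Measurable[mΩ] f := hY d
  set B : Set Ω := D ⁻¹' {d} with hB_def
  have hB : MeasurableSet[mΩ] B := hD (measurableSet_singleton d)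
  -- the m-measurability of π d as a function measurable wrt the ambient σ-algebra
  have hπm : Measurable[mΩ] (π d) := (hπmeas d).mono hm le_rfl
  have hπ_nonneg : ∀ᵐ ω ∂μ, 0 ≤ π d ω := by
    filter_upwards [hOverlap d] with ω hω using hc.le.trans hω.1
  have hπ_le_one : ∀ᵐ ω ∂μ, ‖π d ω‖ ≤ 1 := by
    filter_upwards [hOverlap d] with ω hω
    rw [Real.norm_eq_abs, abs_of_nonneg (hc.le.trans hω.1)]
    exact hω.2.trans hcbar.le
  -- identify π d with the conditional expectation of the indicator of B
  have hπ' : π d =ᵐ[μ] μ⟦B | m⟧ := by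
    have : (fun ω => if D ω = d then (1 : ℝ) else 0) =
        B.indicator (fun _ => (1 : ℝ)) := by
      funext ω
      by_cases h : D ω = d <;> simp [hB_def, Set.indicator, h]
    rw [← this]; exact hπ d
  -- the two measures
  set ν₁ := μ.restrict B with hν₁_def
  set ν₂ := μ.withDensity (fun ω => ENNReal.ofReal (π d ω)) with hν₂_def
  -- σ-algebra generated by X and Ystar d
  set mf : MeasurableSpace Ω := MeasurableSpace.comap f inferInstance with hmf_def
  have hmf : mf ≤ mΩ := hfmeas.comap_le
  set m' : MeasurableSpace Ω := m ⊔ mf with hm'_def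
  letI : MeasurableSpace Ω := mΩ
  have hm' : m' ≤ mΩ := sup_le hm hmf
  have hfm' : Measurable[m'] f := by
    intro s hs
    exact (le_sup_right : mf ≤ m') _ ⟨s, hs, rfl⟩
  -- the π-system generating m'
  set C : Set (Set Ω) :=
    {t | ∃ A s, MeasurableSet[m] A ∧ MeasurableSet s ∧ t = A ∩ f ⁻¹' s} with hC_def
  have hC_pi : IsPiSystem C := by
    rintro t₁ ⟨A₁, s₁, hA₁, hs₁, rfl⟩ t₂ ⟨A₂, s₂, hA₂, hs₂, rfl⟩ -
    exact ⟨A₁ ∩ A₂, s₁ ∩ s₂, hA₁.inter hA₂, hs₁.inter hs₂, by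
      simp only [Set.preimage_inter]
      ext ω; simp; tauto⟩
  have hC_gen : m' = MeasurableSpace.generateFrom C := by
    refine le_antisymm (sup_le ?_ ?_) (MeasurableSpace.generateFrom_le ?_)
    · intro A hA
      exact MeasurableSpace.measurableSet_generateFrom
        ⟨A, Set.univ, hA, MeasurableSet.univ, by simp⟩
    · rintro t ⟨s, hs, rfl⟩
      exact MeasurableSpace.measurableSet_generateFrom
        ⟨Set.univ, s, MeasurableSet.univ, hs, by simp⟩
    · rintro t ⟨A, s, hA, hs, rfl⟩
      exact ((le_sup_left : m ≤ m') _ hA).inter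
        ((le_sup_right : mf ≤ m') _ ⟨s, hs, rfl⟩)
  -- key computation on generators
  have hkey : ∀ A s, MeasurableSet[m] A → MeasurableSet s →
      ν₁ (A ∩ f ⁻¹' s) = ν₂ (A ∩ f ⁻¹' s) := by
    intro A s hAm hs
    have hA : MeasurableSet[mΩ] A := hm _ hAm
    have hE : MeasurableSet[mΩ] (f ⁻¹' s) := hfmeas hs
    have ht : MeasurableSet[mΩ] (A ∩ f ⁻¹' s) := hA.inter hE
    -- real-valued chain
    have hindE : Integrable ((f ⁻¹' s ∩ B).indicator (fun _ => (1 : ℝ))) μ :=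
      (integrable_const (1 : ℝ)).indicator (hE.inter hB)
    have hindE' : Integrable ((f ⁻¹' s).indicator (fun _ => (1 : ℝ))) μ :=
      (integrable_const (1 : ℝ)).indicator hE
    have step1 : (μ ((A ∩ f ⁻¹' s) ∩ B)).toReal
        = ∫ ω in A, ((f ⁻¹' s ∩ B).indicator (fun _ => (1 : ℝ))) ω ∂μ := by
      rw [setIntegral_indicator (hE.inter hB), setIntegral_const, Set.inter_assoc]
      simp; rfl
    have step2 : ∫ ω in A, ((f ⁻¹' s ∩ B).indicator (fun _ => (1 : ℝ))) ω ∂μ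
        = ∫ ω in A, (μ⟦f ⁻¹' s ∩ B | m⟧) ω ∂μ :=
      (setIntegral_condExp hm hindE hAm).symm
    have hCI := (condIndepFun_iff_condExp_inter_preimage_eq_mul
      (hm' := hm) hfmeas hD).mp (hUnconf d) s {d} hs (measurableSet_singleton d)
    have step3 : ∫ ω in A, (μ⟦f ⁻¹' s ∩ B | m⟧) ω ∂μ
        = ∫ ω in A, π d ω * (μ⟦f ⁻¹' s | m⟧) ω ∂μ := by
      refine integral_congr_ae (ae_restrict_of_ae ?_)
      filter_upwards [hCI, hπ'] with ω h1 h2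
      rw [h1, h2]; ring
    have hpull : μ[(fun ω => π d ω * (f ⁻¹' s).indicator (fun _ => (1 : ℝ)) ω) | m]
        =ᵐ[μ] fun ω => π d ω * (μ⟦f ⁻¹' s | m⟧) ω := by
      have := condExp_mul_of_stronglyMeasurable_left (μ := μ) (m := m)
        (hπmeas d).stronglyMeasurable
        (hindE'.bdd_mul (c := 1) hπm.aestronglyMeasurable hπ_le_one)
        hindE'
      exact this
    have step4 : ∫ ω in A, π d ω * (μ⟦f ⁻¹' s | m⟧) ω ∂μ
        = ∫ ω in A ∩ f ⁻¹' s, π d ω ∂μ := by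
      rw [← integral_congr_ae (ae_restrict_of_ae hpull),
        setIntegral_condExp hm
          (hindE'.bdd_mul (c := 1) hπm.aestronglyMeasurable hπ_le_one) hAm]
      rw [← setIntegral_indicator hE]
      refine setIntegral_congr_ae hA ?_
      filter_upwards with ω _
      by_cases h : ω ∈ f ⁻¹' s <;> simp [Set.indicator, h]
    have hπ_int : Integrable (π d) (μ.restrict (A ∩ f ⁻¹' s)) :=
      ((integrable_const (1 : ℝ)).bdd_mul (c := 1) hπm.aestronglyMeasurable
        hπ_le_one).restrict.congr (by filter_upwards with ω using mul_one _)
    -- pass to ℝ≥0∞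
    have hreal : (μ ((A ∩ f ⁻¹' s) ∩ B)).toReal = ∫ ω in A ∩ f ⁻¹' s, π d ω ∂μ := by
      rw [step1, step2, step3, step4]
    calc ν₁ (A ∩ f ⁻¹' s) = μ ((A ∩ f ⁻¹' s) ∩ B) := Measure.restrict_apply ht
      _ = ENNReal.ofReal ((μ ((A ∩ f ⁻¹' s) ∩ B)).toReal) :=
          (ENNReal.ofReal_toReal (measure_ne_top μ _)).symm
      _ = ENNReal.ofReal (∫ ω in A ∩ f ⁻¹' s, π d ω ∂μ) := by rw [hreal]
      _ = ∫⁻ ω in A ∩ f ⁻¹' s, ENNReal.ofReal (π d ω) ∂μ :=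
          ofReal_integral_eq_lintegral_ofReal hπ_int (ae_restrict_of_ae hπ_nonneg)
      _ = ν₂ (A ∩ f ⁻¹' s) := (withDensity_apply _ ht).symm
  -- the two measures agree on m'
  haveI : IsFiniteMeasure ν₁ := inferInstance
  have hagree : ∀ t, MeasurableSet[m'] t → ν₁ t = ν₂ t := by
    intro t ht
    refine ext_on_measurableSpace_of_generate_finite _ C ?_ hm' hC_gen hC_pi ?_ ht
    · rintro u ⟨A, s, hA, hs, rfl⟩; exact hkey A s hA hs
    · have := hkey Set.univ Set.univ MeasurableSet.univ MeasurableSet.univ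
      simpa using this
  have htrim : ν₁.trim hm' = ν₂.trim hm' := by
    refine @Measure.ext _ m' _ _ (fun t ht => ?_)
    rw [trim_measurableSet_eq hm' ht, trim_measurableSet_eq hm' ht]
    exact hagree t ht
  -- Step A : Ystar d is integrable
  have hfInt : Integrable f μ := by
    refine ⟨hfmeas.aestronglyMeasurable, ?_⟩
    have hgm' : Measurable[m'] (fun ω => (‖f ω‖₊ : ℝ≥0∞)) := by
      letI : MeasurableSpace Ω := m'; exact hfm'.nnnorm.coe_nnreal_ennreal
    have hlin : ∫⁻ ω, (‖f ω‖₊ : ℝ≥0∞) ∂ν₁ = ∫⁻ ω, (‖f ω‖₊ : ℝ≥0∞) ∂ν₂ := by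
      rw [← lintegral_trim hm' hgm', ← lintegral_trim hm' hgm', htrim]
    have h1 : ∫⁻ ω, (‖f ω‖₊ : ℝ≥0∞) ∂ν₁ < ⊤ := by
      calc ∫⁻ ω, (‖f ω‖₊ : ℝ≥0∞) ∂ν₁
          ≤ ∫⁻ ω, (‖Ystar (D ω) ω‖₊ : ℝ≥0∞) ∂μ := by
            rw [hν₁_def]
            refine le_trans (le_of_eq (setLIntegral_congr_fun hB ?_))
              (setLIntegral_le_lintegral _ _)
            intro ω hω
            simp only [hB_def, Set.mem_preimage, Set.mem_singleton_iff] at hω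
            beta_reduce
            rw [hf_def, hω]
        _ < ⊤ := hYint.2
    have h2 : ENNReal.ofReal c * ∫⁻ ω, (‖f ω‖₊ : ℝ≥0∞) ∂μ
        ≤ ∫⁻ ω, (‖f ω‖₊ : ℝ≥0∞) ∂ν₂ := by
      rw [hν₂_def, lintegral_withDensity_eq_lintegral_mul μ
        (hπm.ennreal_ofReal) hfmeas.nnnorm.coe_nnreal_ennreal]
      rw [← lintegral_const_mul _ hfmeas.nnnorm.coe_nnreal_ennreal]
      refine lintegral_mono_ae ?_
      filter_upwards [hOverlap d] with ω hω
      exact mul_le_mul_left (ENNReal.ofReal_le_ofReal hω.1) _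
    have hfin : ENNReal.ofReal c * ∫⁻ ω, (‖f ω‖₊ : ℝ≥0∞) ∂μ < ⊤ :=
      lt_of_le_of_lt (h2.trans_eq hlin.symm) h1
    have hc0 : ENNReal.ofReal c ≠ 0 := by
      simp [ENNReal.ofReal_eq_zero, not_le, hc]
    by_contra h
    rw [HasFiniteIntegral, not_lt, top_le_iff] at h
    rw [show ∫⁻ ω, (‖f ω‖₊ : ℝ≥0∞) ∂μ = ⊤ from h, ENNReal.mul_top hc0] at hfin
    exact (lt_irrefl _ hfin).elim
  -- Step E : Bochner integrals against the two measures
  have hEint : ∀ A : Set Ω, MeasurableSet[m] A →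
      ∫ ω in A, π d ω * f ω ∂μ = ∫ ω in A, B.indicator (fun _ => (1:ℝ)) ω * f ω ∂μ := by
    intro A hAm
    have hA : MeasurableSet[mΩ] A := hm _ hAm
    have hAm' : MeasurableSet[m'] A := (le_sup_left : m ≤ m') _ hAm
    have hsm' : StronglyMeasurable[m'] (A.indicator f) :=
      (hfm'.stronglyMeasurable).indicator hAm'
    have hint : ∫ ω, A.indicator f ω ∂ν₁ = ∫ ω, A.indicator f ω ∂ν₂ := by
      rw [integral_trim hm' hsm', integral_trim hm' hsm', htrim]
    have e1 : ∫ ω, A.indicator f ω ∂ν₁ = ∫ ω in A, B.indicator (fun _ => (1:ℝ)) ω * f ω ∂μ := by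
      have : ∀ ω, B.indicator (fun _ => (1:ℝ)) ω * f ω = B.indicator f ω := by
        intro ω; by_cases h : ω ∈ B <;> simp [Set.indicator, h]
      simp_rw [this]
      rw [hν₁_def, setIntegral_indicator hA, setIntegral_indicator hB, Set.inter_comm]
    have e2 : ∫ ω, A.indicator f ω ∂ν₂ = ∫ ω in A, π d ω * f ω ∂μ := by
      have hν₂' : ν₂ = μ.withDensity (fun ω => ((π d ω).toNNReal : ℝ≥0∞)) := rfl
      rw [hν₂', integral_withDensity_eq_integral_smul hπm.real_toNNReal]
      rw [← integral_indicator hA]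
      refine integral_congr_ae ?_
      filter_upwards [hπ_nonneg] with ω hω
      rw [NNReal.smul_def, Real.coe_toNNReal _ hω]
      by_cases h : ω ∈ A <;> simp [Set.indicator, h]
    rw [← e2, ← hint, e1]
  -- Step F : π d * E[f | m] is a version of E[1_B f | m]
  set k : Ω → ℝ := fun ω => B.indicator (fun _ => (1:ℝ)) ω * f ω with hk_def
  have hk_int : Integrable k μ := by
    refine (hfInt.indicator hB).congr ?_
    filter_upwards with ω
    by_cases h : ω ∈ B <;> simp [hk_def, Set.indicator, h]
  have hg_int : Integrable (fun ω => π d ω * (μ[f | m]) ω) μ :=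
    integrable_condExp.bdd_mul (c := 1) hπm.aestronglyMeasurable hπ_le_one
  have hπf_int : Integrable (fun ω => π d ω * f ω) μ :=
    hfInt.bdd_mul (c := 1) hπm.aestronglyMeasurable hπ_le_one
  have hpull : μ[(fun ω => π d ω * f ω) | m] =ᵐ[μ] fun ω => π d ω * (μ[f | m]) ω :=
    condExp_mul_of_stronglyMeasurable_left (hπmeas d).stronglyMeasurable hπf_int hfInt
  have hcond : (fun ω => π d ω * (μ[f | m]) ω) =ᵐ[μ] μ[k | m] := by
    refine ae_eq_condExp_of_forall_setIntegral_eq hm hk_int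
      (fun s hs _ => hg_int.integrableOn) (fun s hs _ => ?_) ?_
    · calc ∫ ω in s, π d ω * (μ[f | m]) ω ∂μ
          = ∫ ω in s, (μ[(fun ω => π d ω * f ω) | m]) ω ∂μ :=
            (integral_congr_ae (ae_restrict_of_ae hpull)).symm
        _ = ∫ ω in s, π d ω * f ω ∂μ := setIntegral_condExp hm hπf_int hs
        _ = ∫ ω in s, k ω ∂μ := hEint s hs
    · exact StronglyMeasurable.aestronglyMeasurable
        ((hπmeas d).stronglyMeasurable.mul stronglyMeasurable_condExp)
  -- Step G : conclude
  have hGd : (fun ω => G d ω * π d ω) =ᵐ[μ] μ[k | m] := by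
    have hfun : (fun ω => (if D ω = d then (1:ℝ) else 0) * Ystar (D ω) ω) = k := by
      funext ω
      by_cases h : D ω = d <;> simp [hk_def, hB_def, Set.indicator, h, hf_def]
    have := hG d
    rwa [hfun] at this
  have hGeq : G d =ᵐ[μ] μ[f | m] := by
    filter_upwards [hGd, hcond, hOverlap d] with ω h1 h2 h3
    have hπpos : π d ω ≠ 0 := ne_of_gt (lt_of_lt_of_le hc h3.1)
    exact mul_right_cancel₀ hπpos
      (show G d ω * π d ω = (μ[f | m]) ω * π d ω by rw [h1, ← h2]; ring)
  rw [integral_congr_ae hGeq, integral_condExp hm]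
end

section
/- Suppose the unconfoundedness assumption and the overlap assumption hold. Fix d, d' ∈ {0,1,...,J} with p_{d'} := P(D = d') > 0, fix β ∈ ℝ, and suppose L(Y*(d) − β) is integrable. Then E[ L(Y*(d) − β) | D = d' ] = (1/p_{d'}) · E[ D_d · (π*_{d'}(X)/π*_d(X)) · L(Y − β) ]. Consequently, the treated-subgroup parameter vector β*_{d'} := argmin_β Σ_{d=0}^{J} E[L(Y*(d) − β_d) | D = d'] coincides with the minimizer of Σ_{d=0}^{J} (1/p_{d'}) E[ D_d (π*_{d'}(X)/π*_d(X)) L(Y − β_d) ]. -/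
open MeasureTheory ProbabilityTheory Filter

lemma key_setIntegral
    {Ω : Type*} {m mΩ : MeasurableSpace Ω} (hm : m ≤ mΩ)
    (μ : Measure Ω) [IsProbabilityMeasure μ]
    {h : Ω → ℝ} (hh : Measurable h)
    {A : Set Ω} (hA : MeasurableSet A)
    (hindep : ∀ t : Set ℝ, MeasurableSet t →
      (μ⟦h ⁻¹' t ∩ A | m⟧) =ᵐ[μ] fun ω => (μ⟦h ⁻¹' t | m⟧) ω * (μ⟦A | m⟧) ω)
    {s : Set Ω} (hs : MeasurableSet[m] s) :
    ∫ ω in s, A.indicator h ω ∂μ = ∫ ω in s, (μ⟦A | m⟧) ω * h ω ∂μ := by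
  haveI : IsFiniteMeasure (μ.trim hm) := isFiniteMeasure_trim hm
  set q : Ω → ℝ := μ⟦A | m⟧ with hq_def
  have hq_meas : StronglyMeasurable[m] q := stronglyMeasurable_condExp
  have hq_meas0 : Measurable q := (hq_meas.mono hm).measurable
  have hq_int : Integrable q μ := integrable_condExp
  have hq_nonneg : 0 ≤ᵐ[μ] q :=
    condExp_nonneg (Filter.Eventually.of_forall
      (Set.indicator_nonneg (fun _ _ => zero_le_one)))
  have hq_le_one : q ≤ᵐ[μ] fun _ => (1 : ℝ) := by
    have h1 : μ[(fun _ => (1:ℝ)) | m] = fun _ => (1:ℝ) := condExp_const hm 1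
    have := condExp_mono (μ := μ) (m := m)
      ((integrable_const (1:ℝ)).indicator hA) (integrable_const (1:ℝ))
      (Filter.Eventually.of_forall fun ω => Set.indicator_le_self' (fun _ _ => zero_le_one) ω)
    rw [h1] at this
    exact this
  -- the two pushforward measures agree
  have hAm : MeasurableSet A := hA
  have hsm : MeasurableSet s := hm s hs
  have hmeq : (μ.restrict (s ∩ A)).map h
      = (((μ.restrict s).withDensity (fun ω => ENNReal.ofReal (q ω)))).map h := by
    ext t ht
    rw [Measure.map_apply hh ht, Measure.map_apply hh ht,
      Measure.restrict_apply (hh ht), withDensity_apply _ (hh ht),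
      Measure.restrict_restrict (hh ht)]
    -- real-valued chain
    have hit : Integrable ((h ⁻¹' t ∩ A).indicator fun _ => (1:ℝ)) μ :=
      (integrable_const (1:ℝ)).indicator ((hh ht).inter hAm)
    have hit' : Integrable ((h ⁻¹' t).indicator fun _ => (1:ℝ)) μ :=
      (integrable_const (1:ℝ)).indicator (hh ht)
    have hqi : Integrable (fun ω => q ω * (h ⁻¹' t).indicator (fun _ => (1:ℝ)) ω) μ := by
      refine Integrable.bdd_mul (c := 1) hit' hq_meas0.aestronglyMeasurable ?_
      filter_upwards [hq_nonneg, hq_le_one] with ω h0 h1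
      rw [Real.norm_eq_abs, abs_of_nonneg h0]; exact h1
    have hpull : μ[(fun ω => q ω * (h ⁻¹' t).indicator (fun _ => (1:ℝ)) ω) | m]
        =ᵐ[μ] fun ω => q ω * (μ⟦h ⁻¹' t | m⟧) ω :=
      condExp_mul_of_stronglyMeasurable_left hq_meas hqi hit'
    have hreal : ∫ ω in s, (h ⁻¹' t ∩ A).indicator (fun _ => (1:ℝ)) ω ∂μ
        = ∫ ω in s, q ω * (h ⁻¹' t).indicator (fun _ => (1:ℝ)) ω ∂μ := by
      rw [← setIntegral_condExp hm hit hs, ← setIntegral_condExp hm hqi hs]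
      refine setIntegral_congr_ae hsm ?_
      filter_upwards [hindep t ht, hpull] with ω h1 h2 _
      rw [h1, h2, mul_comm]
    -- convert both sides to real integrals
    have e1 : μ (h ⁻¹' t ∩ (s ∩ A))
        = ENNReal.ofReal (∫ ω in s, (h ⁻¹' t ∩ A).indicator (fun _ => (1:ℝ)) ω ∂μ) := by
      rw [integral_indicator ((hh ht).inter hAm), setIntegral_const, smul_eq_mul, mul_one,
        measureReal_restrict_apply ((hh ht).inter hAm), Set.inter_assoc,
        Set.inter_comm A s, ← Set.inter_assoc, Set.inter_comm (h ⁻¹' t ∩ s) A,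
        ← Set.inter_assoc, Set.inter_comm A (h ⁻¹' t), Set.inter_assoc,
        Set.inter_comm A s, ← Set.inter_assoc]
      exact (ENNReal.ofReal_toReal (measure_ne_top μ _)).symm
    have e2 : ∫⁻ ω in h ⁻¹' t ∩ s, ENNReal.ofReal (q ω) ∂μ
        = ENNReal.ofReal (∫ ω in s, q ω * (h ⁻¹' t).indicator (fun _ => (1:ℝ)) ω ∂μ) := by
      have : ∀ ω, q ω * (h ⁻¹' t).indicator (fun _ => (1:ℝ)) ω
          = (h ⁻¹' t).indicator q ω := by
        intro ω
        by_cases hω : ω ∈ h ⁻¹' t <;> simp [hω]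
      simp_rw [this]
      rw [integral_indicator (hh ht), Measure.restrict_restrict (hh ht)]
      rw [← ofReal_integral_eq_lintegral_ofReal
        (hq_int.integrableOn) (ae_restrict_of_ae hq_nonneg)]
    rw [e1, e2, hreal]
  -- now use the measure equality to compute integrals
  have hL : ∫ ω in s, A.indicator h ω ∂μ = ∫ ω in s ∩ A, h ω ∂μ := by
    rw [integral_indicator hAm, Measure.restrict_restrict hAm, Set.inter_comm]
  have i1 : ∫ ω in s ∩ A, h ω ∂μ = ∫ x, x ∂((μ.restrict (s ∩ A)).map h) :=
    (integral_map hh.aemeasurable aestronglyMeasurable_id).symm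
  have i2 : ∫ x, x ∂(((μ.restrict s).withDensity fun ω => ENNReal.ofReal (q ω)).map h)
      = ∫ ω in s, (q ω).toNNReal • h ω ∂μ :=
    (integral_map hh.aemeasurable aestronglyMeasurable_id).trans
      (integral_withDensity_eq_integral_smul hq_meas0.real_toNNReal h)
  rw [hL, i1, hmeq, i2]
  refine setIntegral_congr_ae hsm ?_
  filter_upwards [hq_nonneg] with ω h0 _
  rw [NNReal.smul_def, Real.coe_toNNReal _ h0, smul_eq_mul]

lemma key_condexp
    {Ω : Type*} {m mΩ : MeasurableSpace Ω} (hm : m ≤ mΩ)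
    (μ : Measure Ω) [IsProbabilityMeasure μ]
    {h : Ω → ℝ} (hh : Measurable h) (hhint : Integrable h μ)
    {A : Set Ω} (hA : MeasurableSet A)
    (hindep : ∀ t : Set ℝ, MeasurableSet t →
      (μ⟦h ⁻¹' t ∩ A | m⟧) =ᵐ[μ] fun ω => (μ⟦h ⁻¹' t | m⟧) ω * (μ⟦A | m⟧) ω) :
    (fun ω => (μ⟦A | m⟧) ω * (μ[h | m]) ω) =ᵐ[μ] μ[A.indicator h | m] := by
  haveI : IsFiniteMeasure (μ.trim hm) := isFiniteMeasure_trim hm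
  set q : Ω → ℝ := μ⟦A | m⟧ with hq_def
  have hq_meas : StronglyMeasurable[m] q := stronglyMeasurable_condExp
  have hq_meas0 : Measurable q := (hq_meas.mono hm).measurable
  have hq_nonneg : 0 ≤ᵐ[μ] q :=
    condExp_nonneg (Filter.Eventually.of_forall
      (Set.indicator_nonneg (fun _ _ => zero_le_one)))
  have hq_le_one : q ≤ᵐ[μ] fun _ => (1 : ℝ) := by
    have h1 : μ[(fun _ => (1:ℝ)) | m] = fun _ => (1:ℝ) := condExp_const hm 1
    have := condExp_mono (μ := μ) (m := m)
      ((integrable_const (1:ℝ)).indicator hA) (integrable_const (1:ℝ))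
      (Filter.Eventually.of_forall fun ω => Set.indicator_le_self' (fun _ _ => zero_le_one) ω)
    rw [h1] at this
    exact this
  have hq_bound : ∀ᵐ ω ∂μ, ‖q ω‖ ≤ 1 := by
    filter_upwards [hq_nonneg, hq_le_one] with ω h0 h1
    rw [Real.norm_eq_abs, abs_of_nonneg h0]; exact h1
  have hqh_int : Integrable (fun ω => q ω * h ω) μ :=
    Integrable.bdd_mul (c := 1) hhint hq_meas0.aestronglyMeasurable hq_bound
  refine ae_eq_condExp_of_forall_setIntegral_eq hm (hhint.indicator hA)
    (fun s _ _ => ?_) (fun s hs _ => ?_) ?_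
  · exact (Integrable.bdd_mul (c := 1) integrable_condExp
      hq_meas0.aestronglyMeasurable hq_bound).integrableOn
  · have e1 : ∫ ω in s, q ω * (μ[h | m]) ω ∂μ = ∫ ω in s, q ω * h ω ∂μ := by
      rw [← setIntegral_condExp hm hqh_int hs]
      refine setIntegral_congr_ae (hm s hs) ?_
      filter_upwards [condExp_mul_of_stronglyMeasurable_left hq_meas hqh_int hhint] with ω h1 _
      exact h1.symm
    rw [e1, ← key_setIntegral hm μ hh hA hindep hs]
  · exact (hq_meas.mul stronglyMeasurable_condExp).aestronglyMeasurable

/-- Under unconfoundedness and overlap, with `p_{d'} = P(D = d') > 0`,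
for every `d` and `β` (with `L(Y*(d) − β)` integrable),
`E[L(Y*(d) − β) | D = d'] = (1/p_{d'}) E[ D_d (π*_{d'}(X)/π*_d(X)) L(Y − β) ]`;
consequently the treated-subgroup objective `Σ_d E[L(Y*(d) − β_d) | D = d']` coincides with
`Σ_d (1/p_{d'}) E[ D_d (π*_{d'}(X)/π*_d(X)) L(Y − β_d) ]`, so the two minimization problems
have the same minimizers. -/
theorem treated_subgroup_identity
    {Ω : Type*} [MeasurableSpace Ω] [StandardBorelSpace Ω] [Nonempty Ω]
    (μ : Measure Ω) [IsProbabilityMeasure μ]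
    {J : ℕ} (D : Ω → Fin (J + 1)) (hD : Measurable D)
    {p : ℕ} (X : Ω → (Fin p → ℝ)) (hX : Measurable X)
    (Ystar : Fin (J + 1) → Ω → ℝ) (hY : ∀ d, Measurable (Ystar d))
    -- unconfoundedness
    (hUnconf : ∀ d : Fin (J + 1),
      CondIndepFun (MeasurableSpace.comap X inferInstance) hX.comap_le (Ystar d) D μ)
    -- propensity scores
    (π : Fin (J + 1) → Ω → ℝ)
    (hπmeas : ∀ d, Measurable[MeasurableSpace.comap X inferInstance] (π d))
    (hπ : ∀ d : Fin (J + 1), π d =ᵐ[μ]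
      μ[(fun ω => if D ω = d then (1 : ℝ) else 0) | MeasurableSpace.comap X inferInstance])
    -- overlap
    (c cbar : ℝ) (hc : 0 < c) (hcbar : cbar < 1)
    (hOverlap : ∀ d : Fin (J + 1), ∀ᵐ ω ∂μ, π d ω ∈ Set.Icc c cbar)
    -- convex loss, integrable at every parameter value
    (L : ℝ → ℝ) (hL : ConvexOn ℝ Set.univ L)
    (hint : ∀ (d : Fin (J + 1)) (β : ℝ), Integrable (fun ω => L (Ystar d ω - β)) μ)
    -- the treated subgroup `d'` has positive probability `p_{d'}`
    (d' : Fin (J + 1)) (pd' : ℝ) (hpd' : 0 < pd')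
    (hpd'' : (μ {ω | D ω = d'}).toReal = pd') :
    (∀ (d : Fin (J + 1)) (β : ℝ),
        ∫ ω, L (Ystar d ω - β) ∂(μ[|{ω | D ω = d'}])
          = (1 / pd') *
            ∫ ω, (if D ω = d then (1 : ℝ) else 0) * (π d' ω / π d ω)
              * L (Ystar (D ω) ω - β) ∂μ) ∧
    (∀ βstar : Fin (J + 1) → ℝ,
      (∀ b : Fin (J + 1) → ℝ,
          ∑ d : Fin (J + 1), ∫ ω, L (Ystar d ω - βstar d) ∂(μ[|{ω | D ω = d'}])
            ≤ ∑ d : Fin (J + 1), ∫ ω, L (Ystar d ω - b d) ∂(μ[|{ω | D ω = d'}]))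
        ↔ (∀ b : Fin (J + 1) → ℝ,
          ∑ d : Fin (J + 1), (1 / pd') *
              ∫ ω, (if D ω = d then (1 : ℝ) else 0) * (π d' ω / π d ω)
                * L (Ystar (D ω) ω - βstar d) ∂μ
            ≤ ∑ d : Fin (J + 1), (1 / pd') *
              ∫ ω, (if D ω = d then (1 : ℝ) else 0) * (π d' ω / π d ω)
                * L (Ystar (D ω) ω - b d) ∂μ)) := by
  have hm := hX.comap_le (f := X)
  haveI : IsFiniteMeasure (μ.trim hm) := isFiniteMeasure_trim hm
  have hLc : Continuous L :=
    continuousOn_univ.mp (hL.continuousOn isOpen_univ)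
  have main : ∀ (d : Fin (J + 1)) (β : ℝ),
      ∫ ω, L (Ystar d ω - β) ∂(μ[|{ω | D ω = d'}])
        = (1 / pd') * ∫ ω, (if D ω = d then (1:ℝ) else 0) * (π d' ω / π d ω)
            * L (Ystar (D ω) ω - β) ∂μ := by
    intro d β
    set h : Ω → ℝ := fun ω => L (Ystar d ω - β) with hh_def
    have hh : Measurable h := hLc.measurable.comp ((hY d).sub measurable_const)
    have hhint : Integrable h μ := hint d β
    have hci : CondIndepFun (MeasurableSpace.comap X inferInstance) hm h D μ :=
      (hUnconf d).comp (φ := fun y => L (y - β)) (ψ := id)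
        (hLc.measurable.comp (measurable_id.sub measurable_const)) measurable_id
    have hmul := (condIndepFun_iff_condExp_inter_preimage_eq_mul hh hD).mp hci
    have key : ∀ e : Fin (J + 1),
        (fun ω => (μ⟦D ⁻¹' {e} | (MeasurableSpace.comap X inferInstance)⟧) ω * (μ[h | (MeasurableSpace.comap X inferInstance)]) ω)
          =ᵐ[μ] μ[(D ⁻¹' {e}).indicator h | (MeasurableSpace.comap X inferInstance)] := fun e =>
      key_condexp hm μ hh hhint (hD (measurableSet_singleton e))
        (fun t ht => hmul t {e} ht (measurableSet_singleton e))
    have hqe : ∀ e : Fin (J + 1), π e =ᵐ[μ] μ⟦D ⁻¹' {e} | (MeasurableSpace.comap X inferInstance)⟧ := by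
      intro e
      have heq : (fun ω => if D ω = e then (1:ℝ) else 0)
          = (D ⁻¹' {e}).indicator fun _ => (1:ℝ) := by
        funext ω; by_cases hω : D ω = e <;> simp [Set.indicator_apply, hω]
      have h2 := hπ e
      rw [heq] at h2
      exact h2
    have hA' : MeasurableSet (D ⁻¹' {d'}) := hD (measurableSet_singleton d')
    have hAd : MeasurableSet (D ⁻¹' {d}) := hD (measurableSet_singleton d)
    have hset : {ω | D ω = d'} = D ⁻¹' {d'} := rfl
    -- LHS
    have hLHS : ∫ ω, h ω ∂(μ[|{ω | D ω = d'}])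
        = (1 / pd') * ∫ ω, (μ⟦D ⁻¹' {d'} | (MeasurableSpace.comap X inferInstance)⟧) ω * (μ[h | (MeasurableSpace.comap X inferInstance)]) ω ∂μ := by
      rw [hset, ProbabilityTheory.cond, integral_smul_measure]
      have e0 : ∫ ω, h ω ∂(μ.restrict (D ⁻¹' {d'})) = ∫ ω, (D ⁻¹' {d'}).indicator h ω ∂μ :=
        (integral_indicator hA').symm
      rw [e0, ← integral_condExp hm (f := (D ⁻¹' {d'}).indicator h),
        ← integral_congr_ae (key d')]
      have : ((μ (D ⁻¹' {d'}))⁻¹).toReal = 1 / pd' := by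
        rw [ENNReal.toReal_inv, ← hset, hpd'', one_div]
      rw [this, smul_eq_mul]
    -- RHS
    have hRHSfun : (fun ω => (if D ω = d then (1:ℝ) else 0) * (π d' ω / π d ω)
          * L (Ystar (D ω) ω - β))
        = fun ω => (π d' ω / π d ω) * (D ⁻¹' {d}).indicator h ω := by
      funext ω
      by_cases hω : D ω = d
      · simp [Set.indicator_apply, hω, hh_def, mul_comm]
      · simp [Set.indicator_apply, hω]
    have hr_meas : StronglyMeasurable[MeasurableSpace.comap X inferInstance] (fun ω => π d' ω / π d ω) :=
      ((hπmeas d').div (hπmeas d)).stronglyMeasurable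
    have hr_meas0 : Measurable (fun ω => π d' ω / π d ω) := (hr_meas.mono hm).measurable
    have hr_bound : ∀ᵐ ω ∂μ, ‖π d' ω / π d ω‖ ≤ cbar / c := by
      filter_upwards [hOverlap d, hOverlap d'] with ω h1 h2
      rw [Real.norm_eq_abs, abs_div, abs_of_nonneg (hc.le.trans h2.1),
        abs_of_nonneg (hc.le.trans h1.1)]
      exact div_le_div₀ (hc.le.trans (h2.1.trans h2.2)) h2.2 hc h1.1
    have hI_int : Integrable ((D ⁻¹' {d}).indicator h) μ := hhint.indicator hAd
    have hrI_int : Integrable (fun ω => (π d' ω / π d ω) * (D ⁻¹' {d}).indicator h ω) μ :=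
      Integrable.bdd_mul hI_int hr_meas0.aestronglyMeasurable hr_bound
    have hRHS : ∫ ω, (π d' ω / π d ω) * (D ⁻¹' {d}).indicator h ω ∂μ
        = ∫ ω, (μ⟦D ⁻¹' {d'} | (MeasurableSpace.comap X inferInstance)⟧) ω * (μ[h | (MeasurableSpace.comap X inferInstance)]) ω ∂μ := by
      rw [← integral_condExp hm (f := fun ω => (π d' ω / π d ω) * (D ⁻¹' {d}).indicator h ω)]
      refine integral_congr_ae ?_
      have hpull := condExp_mul_of_stronglyMeasurable_left hr_meas hrI_int hI_int
      filter_upwards [hpull, (key d).symm, hqe d, hqe d', hOverlap d] with ω e1 e2 e3 e4 hov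
      have hne : π d ω ≠ 0 := ne_of_gt (lt_of_lt_of_le hc hov.1)
      have : (μ[fun ω => (π d' ω / π d ω) * (D ⁻¹' {d}).indicator h ω|(MeasurableSpace.comap X inferInstance)]) ω
          = (π d' ω / π d ω) * ((μ⟦D ⁻¹' {d} | (MeasurableSpace.comap X inferInstance)⟧) ω * (μ[h | (MeasurableSpace.comap X inferInstance)]) ω) := by
        rw [show (fun ω => (π d' ω / π d ω) * (D ⁻¹' {d}).indicator h ω)
            = (fun ω => π d' ω / π d ω) * (D ⁻¹' {d}).indicator h from rfl, e1]
        show (π d' ω / π d ω) * (μ[(D ⁻¹' {d}).indicator h|(MeasurableSpace.comap X inferInstance)]) ω = _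
        rw [e2]
      rw [this, ← e3, ← e4]
      field_simp
    rw [hLHS, hRHSfun, hRHS]
  refine ⟨main, fun βstar => ?_⟩
  have hobj : ∀ b : Fin (J + 1) → ℝ,
      ∑ d : Fin (J + 1), ∫ ω, L (Ystar d ω - b d) ∂(μ[|{ω | D ω = d'}])
        = ∑ d : Fin (J + 1), (1 / pd') *
            ∫ ω, (if D ω = d then (1:ℝ) else 0) * (π d' ω / π d ω)
              * L (Ystar (D ω) ω - b d) ∂μ :=
    fun b => Finset.sum_congr rfl fun d _ => main d (b d)
  constructor
  · intro H b
    rw [← hobj, ← hobj]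
    exact H b
  · intro H b
    rw [hobj, hobj]
    exact H b
end

section
/- Suppose the unconfoundedness assumption and the overlap assumption hold, and fix d ∈ {0,1,...,J}, β*_d ∈ ℝ. Suppose L'(Y*(d) − β*_d) is square-integrable. Let m_d := E[L'(Y*(d) − β*_d)], let 𝓔_d(X) := E[L'(Y*(d) − β*_d) | σ(X)], let Z_d := ((D_d − π*_d(X))/π*_d(X)) · 𝓔_d(X), and let S_d := (D_d/π*_d(X)) L'(Y − β*_d) − Z_d − m_d be the efficient influence function (up to the factor H_d^{-1}). Then E[ S_d · Z_d ] = 0. -/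
open MeasureTheory ProbabilityTheory Filter
open scoped NNReal ENNReal

lemma memL2_condexp {Ω : Type*} {m m0 : MeasurableSpace Ω} (hm : m ≤ m0) (μ : Measure Ω)
    [IsFiniteMeasure μ] {f : Ω → ℝ} (hf : MemLp f 2 μ) : MemLp (μ[f|m]) 2 μ := by
  haveI : SigmaFinite (μ.trim hm) := inferInstance
  set g : Lp ℝ 2 μ := (condExpL2 ℝ ℝ hm (hf.toLp f) : Lp ℝ 2 μ) with hg
  have hgm : AEStronglyMeasurable[m] (g : Ω → ℝ) μ := lpMeas.aestronglyMeasurable _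
  have heq : (g : Ω → ℝ) =ᵐ[μ] μ[f|m] := by
    refine ae_eq_condExp_of_forall_setIntegral_eq hm (hf.integrable one_le_two)
      (fun s hs hμs => integrableOn_condExpL2_of_measure_ne_top hm hμs.ne _)
      (fun s hs hμs => ?_) hgm
    rw [integral_condExpL2_eq hm (hf.toLp f) hs hμs.ne]
    exact setIntegral_congr_ae (hm s hs) ((hf.coeFn_toLp).mono fun x hx _ => hx)
  exact (Lp.memLp g).ae_eq heq

lemma integrable_mul_L2 {Ω : Type*} [MeasurableSpace Ω] {μ : Measure Ω} {f g : Ω → ℝ}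
    (hf : MemLp f 2 μ) (hg : MemLp g 2 μ) : Integrable (fun ω => f ω * g ω) μ := by
  have h : MemLp (g • f) 1 μ := hf.smul hg (hpqr := ⟨by simp [ENNReal.inv_two_add_inv_two, one_div]⟩)
  exact memLp_one_iff_integrable.mp (by simpa [Pi.smul_apply, smul_eq_mul, mul_comm, Pi.mul_def] using h)

set_option maxHeartbeats 2000000 in
lemma influence_orth_aux {Ω : Type*} {m : MeasurableSpace Ω} {m0 : MeasurableSpace Ω}
    (hm : m ≤ m0) (μ : Measure Ω) [IsProbabilityMeasure μ]
    (B : Set Ω) (hB : MeasurableSet B)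
    (Yd : Ω → ℝ) (hYd : Measurable Yd) (w : ℝ → ℝ) (hw : Measurable w)
    (I W πd Ed : Ω → ℝ)
    (hIB : I = B.indicator (fun _ => (1:ℝ)))
    (hWdef : W = fun ω => w (Yd ω))
    (hπmeas : Measurable[m] πd) (hEdmeas : Measurable[m] Ed)
    (hπB : πd =ᵐ[μ] μ[B.indicator (fun _ => (1:ℝ)) | m])
    (hEd : Ed =ᵐ[μ] μ[W | m])
    (c cbar : ℝ) (hc : 0 < c) (hcbar : cbar < 1)
    (hov : ∀ᵐ ω ∂μ, πd ω ∈ Set.Icc c cbar)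
    (hW2 : MemLp W 2 μ)
    (hprod : ∀ t : Set ℝ, MeasurableSet t →
      μ[((Yd ⁻¹' t) ∩ B).indicator (fun _ => (1:ℝ)) | m] =ᵐ[μ]
      fun ω => (μ[(Yd ⁻¹' t).indicator (fun _ => (1:ℝ)) | m]) ω *
        (μ[B.indicator (fun _ => (1:ℝ)) | m]) ω)
    (md : ℝ) :
    ∫ ω, (I ω / πd ω * W ω - (I ω - πd ω) / πd ω * Ed ω - md)
        * ((I ω - πd ω) / πd ω * Ed ω) ∂μ = 0 := by
  haveI : SigmaFinite (μ.trim hm) := inferInstance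
  have hWmeas : Measurable W := hWdef ▸ hw.comp hYd
  have hWint : Integrable W μ := hW2.integrable one_le_two
  have hEd2 : MemLp Ed 2 μ := (memL2_condexp hm μ hW2).ae_eq hEd.symm
  have hEdint : Integrable Ed μ := hEd2.integrable one_le_two
  have hEdm0 : Measurable Ed := hEdmeas.mono hm le_rfl
  have hπm0 : Measurable πd := hπmeas.mono hm le_rfl
  have hImeas : Measurable I := hIB ▸ measurable_const.indicator hB
  have hπ_pos : ∀ᵐ ω ∂μ, 0 < πd ω := hov.mono fun ω h => lt_of_lt_of_le hc h.1
  have hπ_le1 : ∀ᵐ ω ∂μ, |πd ω| ≤ 1 := hov.mono fun ω h => by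
    rw [abs_of_pos (lt_of_lt_of_le hc h.1)]; linarith [h.2]

  have hπd : πd =ᵐ[μ] μ[I | m] := by rw [hIB]; exact hπB
  have hπint : Integrable πd μ := by
    refine Integrable.mono' (integrable_const (1:ℝ)) hπm0.aestronglyMeasurable ?_
    filter_upwards [hπ_le1] with ω h using by simpa using h
  -- Core identity from conditional independence
  have hCore : ∀ s : Set Ω, MeasurableSet[m] s → ∀ t : Set ℝ, MeasurableSet t →
      (μ (s ∩ B ∩ Yd ⁻¹' t)).toReal = ∫ ω in s ∩ Yd ⁻¹' t, πd ω ∂μ := by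
    intro s hs t ht
    have hsm : MeasurableSet s := hm s hs
    set A := Yd ⁻¹' t with hAdef
    have hAm : MeasurableSet A := hYd ht
    have hint1 : Integrable ((A ∩ B).indicator fun _ => (1:ℝ)) μ :=
      (integrable_const 1).indicator (hAm.inter hB)
    have hintA : Integrable (A.indicator fun _ => (1:ℝ)) μ :=
      (integrable_const 1).indicator hAm
    have hπA_int : Integrable (πd * A.indicator fun _ => (1:ℝ)) μ := by
      refine Integrable.mono' hintA.abs
        ((hπm0.mul (measurable_const.indicator hAm)).aestronglyMeasurable) ?_
      filter_upwards [hπ_le1] with ω h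
      simp only [Pi.mul_apply, Pi.abs_apply, norm_mul, Real.norm_eq_abs]
      calc |πd ω| * |A.indicator (fun _ => (1:ℝ)) ω| ≤ 1 * |A.indicator (fun _ => (1:ℝ)) ω| :=
            mul_le_mul_of_nonneg_right h (abs_nonneg _)
        _ = |A.indicator (fun _ => (1:ℝ)) ω| := one_mul _
    have hpull := condExp_mul_of_stronglyMeasurable_left (m := m) hπmeas.stronglyMeasurable hπA_int hintA
    calc (μ (s ∩ B ∩ A)).toReal
        = ∫ ω in s, (A ∩ B).indicator (fun _ => (1:ℝ)) ω ∂μ := by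
          rw [integral_indicator (hAm.inter hB), Measure.restrict_restrict (hAm.inter hB),
            setIntegral_const, smul_eq_mul, mul_one]
          congr 2
          ext ω; simp [Set.mem_inter_iff]; tauto
      _ = ∫ ω in s, (μ[(A ∩ B).indicator (fun _ => (1:ℝ)) | m]) ω ∂μ :=
          (setIntegral_condExp hm hint1 hs).symm
      _ = ∫ ω in s, (μ[A.indicator (fun _ => (1:ℝ)) | m]) ω *
            (μ[B.indicator (fun _ => (1:ℝ)) | m]) ω ∂μ :=
          integral_congr_ae (ae_restrict_of_ae (hprod t ht))
      _ = ∫ ω in s, πd ω * (μ[A.indicator (fun _ => (1:ℝ)) | m]) ω ∂μ := by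
          refine integral_congr_ae (ae_restrict_of_ae (hπB.mono fun ω h => ?_))
          dsimp only
          rw [← h, mul_comm]
      _ = ∫ ω in s, (μ[πd * A.indicator (fun _ => (1:ℝ)) | m]) ω ∂μ :=
          (integral_congr_ae (ae_restrict_of_ae hpull)).symm
      _ = ∫ ω in s, (πd * A.indicator (fun _ => (1:ℝ))) ω ∂μ :=
          setIntegral_condExp hm hπA_int hs
      _ = ∫ ω in s, A.indicator πd ω ∂μ := by
          refine integral_congr_ae (ae_of_all _ fun ω => ?_)
          by_cases hA' : ω ∈ A <;>
            simp [Pi.mul_apply, Set.indicator_of_mem, Set.indicator_of_notMem, hA']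
      _ = ∫ ω in s ∩ A, πd ω ∂μ := by
          rw [integral_indicator hAm, Measure.restrict_restrict hAm, Set.inter_comm]
  -- change of measure step
  have hStep2 : ∀ s : Set Ω, MeasurableSet[m] s →
      ∫ ω in s, I ω * W ω ∂μ = ∫ ω in s, πd ω * W ω ∂μ := by
    intro s hs
    have hsm : MeasurableSet s := hm s hs
    set d₁ : Ω → ℝ≥0 := (s ∩ B).indicator (fun _ => 1) with hd₁def
    set d₂ : Ω → ℝ≥0 := s.indicator (fun ω => (πd ω).toNNReal) with hd₂def
    have hd₁m : Measurable d₁ := measurable_const.indicator (hsm.inter hB)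
    have hd₂m : Measurable d₂ := hπm0.real_toNNReal.indicator hsm
    have hνeq : (μ.withDensity fun ω => (d₁ ω : ℝ≥0∞)).map Yd
        = (μ.withDensity fun ω => (d₂ ω : ℝ≥0∞)).map Yd := by
      ext t ht
      rw [Measure.map_apply hYd ht, Measure.map_apply hYd ht,
        withDensity_apply _ (hYd ht), withDensity_apply _ (hYd ht)]
      set A := Yd ⁻¹' t with hAdef
      have hAm : MeasurableSet A := hYd ht
      have h₁ : ∫⁻ ω in A, (d₁ ω : ℝ≥0∞) ∂μ = μ (s ∩ B ∩ A) := by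
        have he : (fun ω => (d₁ ω : ℝ≥0∞)) = (s ∩ B).indicator (fun _ => (1:ℝ≥0∞)) := by
          funext ω
          by_cases hmem : ω ∈ s ∩ B <;>
            simp [hd₁def, Set.indicator_of_mem, Set.indicator_of_notMem, hmem]
        rw [he, lintegral_indicator (hsm.inter hB), Measure.restrict_restrict (hsm.inter hB),
          lintegral_one, Measure.restrict_apply MeasurableSet.univ, Set.univ_inter]
      have h₂ : ∫⁻ ω in A, (d₂ ω : ℝ≥0∞) ∂μ = ENNReal.ofReal (∫ ω in s ∩ A, πd ω ∂μ) := by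
        have he : (fun ω => (d₂ ω : ℝ≥0∞)) = fun ω => ENNReal.ofReal (s.indicator πd ω) := by
          funext ω
          by_cases hmem : ω ∈ s <;>
            simp [hd₂def, Set.indicator_of_mem, Set.indicator_of_notMem, hmem, ENNReal.ofReal]
        rw [he, ← ofReal_integral_eq_lintegral_ofReal ((hπint.indicator hsm).restrict)
          (ae_restrict_of_ae (hπ_pos.mono fun ω h => Set.indicator_nonneg (fun _ _ => h.le) ω))]
        congr 1
        rw [integral_indicator hsm, Measure.restrict_restrict hsm, Set.inter_comm]
      rw [h₁, h₂, ← hCore s hs t ht, ENNReal.ofReal_toReal (measure_ne_top μ _)]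
    have hWd : W = fun ω => w (Yd ω) := hWdef
    calc ∫ ω in s, I ω * W ω ∂μ
        = ∫ ω, d₁ ω • W ω ∂μ := by
          rw [← integral_indicator hsm]
          refine integral_congr_ae (ae_of_all _ fun ω => ?_)
          simp only [hIB, hd₁def, NNReal.smul_def, Set.indicator_apply, Set.mem_inter_iff,
            smul_eq_mul]
          by_cases h1 : ω ∈ s <;> by_cases h2 : ω ∈ B <;> simp [h1, h2]
      _ = ∫ ω, W ω ∂(μ.withDensity fun ω => (d₁ ω : ℝ≥0∞)) :=
          (integral_withDensity_eq_integral_smul hd₁m W).symm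
      _ = ∫ y, w y ∂((μ.withDensity fun ω => (d₁ ω : ℝ≥0∞)).map Yd) := by
          rw [integral_map hYd.aemeasurable hw.aestronglyMeasurable, ← hWd]
      _ = ∫ y, w y ∂((μ.withDensity fun ω => (d₂ ω : ℝ≥0∞)).map Yd) := by rw [hνeq]
      _ = ∫ ω, d₂ ω • W ω ∂μ := by
          rw [integral_map hYd.aemeasurable hw.aestronglyMeasurable, ← hWd,
            integral_withDensity_eq_integral_smul hd₂m W]
      _ = ∫ ω in s, πd ω * W ω ∂μ := by
          rw [← integral_indicator hsm]
          refine integral_congr_ae (hπ_pos.mono fun ω h => ?_)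
          simp only [hd₂def, NNReal.smul_def, Set.indicator_apply, smul_eq_mul]
          by_cases h1 : ω ∈ s <;> simp [h1, Real.coe_toNNReal _ h.le]

  -- integrability facts
  have hWE_int : Integrable (fun ω => W ω * Ed ω) μ := integrable_mul_L2 hW2 hEd2
  have hEdsq_int : Integrable (fun ω => Ed ω * Ed ω) μ := integrable_mul_L2 hEd2 hEd2
  have hI1 : ∀ ω, |I ω| ≤ 1 := by
    intro ω; rw [hIB]; by_cases hb : ω ∈ B <;> simp [Set.indicator_of_mem,
      Set.indicator_of_notMem, hb]
  have hI_int : Integrable I μ := by rw [hIB]; exact (integrable_const 1).indicator hB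
  have hIW_int : Integrable (fun ω => I ω * W ω) μ := by
    refine Integrable.mono' hWint.norm ((hImeas.mul hWmeas).aestronglyMeasurable)
      (ae_of_all _ fun ω => ?_)
    simp only [norm_mul, Real.norm_eq_abs]
    calc |I ω| * |W ω| ≤ 1 * |W ω| := mul_le_mul_of_nonneg_right (hI1 ω) (abs_nonneg _)
      _ = |W ω| := one_mul _
  have hπW_int : Integrable (fun ω => πd ω * W ω) μ := by
    refine Integrable.mono' hWint.norm ((hπm0.mul hWmeas).aestronglyMeasurable) ?_
    filter_upwards [hπ_le1] with ω h
    simp only [norm_mul, Real.norm_eq_abs]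
    calc |πd ω| * |W ω| ≤ 1 * |W ω| := mul_le_mul_of_nonneg_right h (abs_nonneg _)
      _ = |W ω| := one_mul _
  have hπEd_int : Integrable (fun ω => πd ω * Ed ω) μ := by
    refine Integrable.mono' hEdint.norm ((hπm0.mul hEdm0).aestronglyMeasurable) ?_
    filter_upwards [hπ_le1] with ω h
    simp only [norm_mul, Real.norm_eq_abs]
    calc |πd ω| * |Ed ω| ≤ 1 * |Ed ω| := mul_le_mul_of_nonneg_right h (abs_nonneg _)
      _ = |Ed ω| := one_mul _
  -- the key conditional expectation identity
  have hgm' : AEStronglyMeasurable[m] (fun ω => πd ω * Ed ω) μ :=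
    StronglyMeasurable.aestronglyMeasurable (hπmeas.mul hEdmeas).stronglyMeasurable
  have hKey : μ[(fun ω => I ω * W ω) | m] =ᵐ[μ] fun ω => πd ω * Ed ω := by
    refine (ae_eq_condExp_of_forall_setIntegral_eq hm hIW_int
      (fun s hs _ => hπEd_int.integrableOn) (fun s hs _ => ?_) hgm').symm
    have hpullW := condExp_mul_of_stronglyMeasurable_left (m := m) hπmeas.stronglyMeasurable
      (show Integrable (πd * W) μ from hπW_int) hWint
    calc ∫ ω in s, πd ω * Ed ω ∂μ
        = ∫ ω in s, πd ω * (μ[W|m]) ω ∂μ :=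
          integral_congr_ae (ae_restrict_of_ae (hEd.mono fun ω h => by dsimp only; rw [h]))
      _ = ∫ ω in s, (μ[πd * W|m]) ω ∂μ := (integral_congr_ae (ae_restrict_of_ae hpullW)).symm
      _ = ∫ ω in s, (πd * W) ω ∂μ := setIntegral_condExp hm hπW_int hs
      _ = ∫ ω in s, I ω * W ω ∂μ := (hStep2 s hs).symm
  -- the three auxiliary functions
  set g₁ : Ω → ℝ := fun ω => (1 - πd ω) / (πd ω * πd ω) * Ed ω with hg₁def
  set g₂ : Ω → ℝ := fun ω => (2 / πd ω - 1 / (πd ω * πd ω)) * (Ed ω * Ed ω)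
    - md / πd ω * Ed ω with hg₂def
  set g₃ : Ω → ℝ := fun ω => -(Ed ω * Ed ω) + md * Ed ω with hg₃def
  have hg₁m : Measurable[m] g₁ :=
    ((measurable_const.sub hπmeas).div (hπmeas.mul hπmeas)).mul hEdmeas
  have hg₂m : Measurable[m] g₂ :=
    (((measurable_const.div hπmeas).sub
      (measurable_const.div (hπmeas.mul hπmeas))).mul (hEdmeas.mul hEdmeas)).sub
      ((measurable_const.div hπmeas).mul hEdmeas)
  have hg₁m0 : Measurable g₁ := hg₁m.mono hm le_rfl
  have hg₂m0 : Measurable g₂ := hg₂m.mono hm le_rfl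
  -- integrability of everything
  have hq₁ : ∀ᵐ ω ∂μ, |(1 - πd ω) / (πd ω * πd ω)| ≤ 1 / (c * c) := by
    filter_upwards [hov] with ω h
    have h0 : 0 < πd ω := lt_of_lt_of_le hc h.1
    rw [abs_of_nonneg (div_nonneg (by linarith [h.2]) (by positivity))]
    exact div_le_div₀ zero_le_one (by linarith [h.1, hc]) (by positivity)
      (mul_le_mul h.1 h.1 hc.le (hc.le.trans h.1))

  have hIWg₁_int : Integrable (fun ω => I ω * W ω * g₁ ω) μ := by
    refine Integrable.mono' (hWE_int.norm.const_mul (1 / (c * c)))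
      (((hImeas.mul hWmeas).mul hg₁m0).aestronglyMeasurable) ?_
    filter_upwards [hq₁] with ω h
    have e : I ω * W ω * g₁ ω = (I ω * ((1 - πd ω) / (πd ω * πd ω))) * (W ω * Ed ω) := by
      simp only [hg₁def]; ring
    rw [Real.norm_eq_abs, e, abs_mul, abs_mul, Real.norm_eq_abs]
    have : |I ω| * |(1 - πd ω) / (πd ω * πd ω)| ≤ 1 * (1 / (c * c)) :=
      mul_le_mul (hI1 ω) h (abs_nonneg _) zero_le_one
    calc |I ω| * |(1 - πd ω) / (πd ω * πd ω)| * |W ω * Ed ω|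
        ≤ 1 * (1 / (c * c)) * |W ω * Ed ω| :=
          mul_le_mul_of_nonneg_right this (abs_nonneg _)
      _ = 1 / (c * c) * |W ω * Ed ω| := by ring
  have hπEdg₁_int : Integrable (fun ω => πd ω * Ed ω * g₁ ω) μ := by
    refine Integrable.mono' (hEdsq_int.norm.const_mul (1 / c))
      (((hπm0.mul hEdm0).mul hg₁m0).aestronglyMeasurable) ?_
    filter_upwards [hov] with ω h
    have h0 : 0 < πd ω := lt_of_lt_of_le hc h.1
    have e : πd ω * Ed ω * g₁ ω = ((1 - πd ω) / πd ω) * (Ed ω * Ed ω) := by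
      simp only [hg₁def]; field_simp
    rw [Real.norm_eq_abs, e, abs_mul, Real.norm_eq_abs]
    have hq : |(1 - πd ω) / πd ω| ≤ 1 / c := by
      rw [abs_of_nonneg (div_nonneg (by linarith [h.2]) h0.le)]
      exact div_le_div₀ zero_le_one (by linarith [h.1, hc]) hc h.1
    exact mul_le_mul_of_nonneg_right hq (abs_nonneg _)
  have hg₂bound : ∀ᵐ ω ∂μ, |g₂ ω| ≤ (2 / c + 1 / (c * c)) * |Ed ω * Ed ω|
      + |md| / c * |Ed ω| := by
    filter_upwards [hov] with ω h
    have h0 : 0 < πd ω := lt_of_lt_of_le hc h.1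
    have e1 : |2 / πd ω - 1 / (πd ω * πd ω)| ≤ 2 / c + 1 / (c * c) := by
      refine (abs_sub _ _).trans ?_
      have a1 : |2 / πd ω| ≤ 2 / c := by
        rw [abs_of_nonneg (by positivity)]
        exact div_le_div₀ (by norm_num) le_rfl hc h.1
      have a2 : |1 / (πd ω * πd ω)| ≤ 1 / (c * c) := by
        rw [abs_of_nonneg (by positivity)]
        exact div_le_div₀ zero_le_one le_rfl (by positivity)
          (mul_le_mul h.1 h.1 hc.le (hc.le.trans h.1))
      linarith
    have e2 : |md / πd ω| ≤ |md| / c := by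
      rw [abs_div, abs_of_pos h0]
      exact div_le_div₀ (abs_nonneg md) le_rfl hc h.1
    calc |g₂ ω| ≤ |(2 / πd ω - 1 / (πd ω * πd ω)) * (Ed ω * Ed ω)| + |md / πd ω * Ed ω| := by
          simp only [hg₂def]; exact abs_sub _ _
      _ = |2 / πd ω - 1 / (πd ω * πd ω)| * |Ed ω * Ed ω| + |md / πd ω| * |Ed ω| := by
          rw [abs_mul (2 / πd ω - 1 / (πd ω * πd ω)) (Ed ω * Ed ω), abs_mul (md / πd ω) (Ed ω)]
      _ ≤ (2 / c + 1 / (c * c)) * |Ed ω * Ed ω| + |md| / c * |Ed ω| := by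
          have := mul_le_mul_of_nonneg_right e1 (abs_nonneg (Ed ω * Ed ω))
          have := mul_le_mul_of_nonneg_right e2 (abs_nonneg (Ed ω))
          linarith
  have hGd_int : Integrable (fun ω => (2 / c + 1 / (c * c)) * ‖Ed ω * Ed ω‖
      + |md| / c * ‖Ed ω‖) μ :=
    (hEdsq_int.norm.const_mul _).add (hEdint.norm.const_mul _)
  have hIg₂_int : Integrable (fun ω => I ω * g₂ ω) μ := by
    refine Integrable.mono' hGd_int ((hImeas.mul hg₂m0).aestronglyMeasurable) ?_
    filter_upwards [hg₂bound] with ω h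
    simp only [Real.norm_eq_abs]
    rw [abs_mul]
    calc |I ω| * |g₂ ω| ≤ 1 * |g₂ ω| := mul_le_mul_of_nonneg_right (hI1 ω) (abs_nonneg _)
      _ = |g₂ ω| := one_mul _
      _ ≤ _ := h
  have hπg₂_int : Integrable (fun ω => πd ω * g₂ ω) μ := by
    refine Integrable.mono' hGd_int ((hπm0.mul hg₂m0).aestronglyMeasurable) ?_
    filter_upwards [hg₂bound, hπ_le1] with ω h h1
    simp only [Real.norm_eq_abs]
    rw [abs_mul]
    calc |πd ω| * |g₂ ω| ≤ 1 * |g₂ ω| := mul_le_mul_of_nonneg_right h1 (abs_nonneg _)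
      _ = |g₂ ω| := one_mul _
      _ ≤ _ := h
  have hg₃_int : Integrable g₃ μ := by
    simp only [hg₃def]
    exact hEdsq_int.neg.add (hEdint.const_mul md)
  -- the two transfer identities
  have T1 : ∫ ω, I ω * W ω * g₁ ω ∂μ = ∫ ω, πd ω * Ed ω * g₁ ω ∂μ := by
    have hr : ∀ ω, I ω * W ω * g₁ ω = g₁ ω * (I ω * W ω) := fun ω => by ring
    have hg₁IW_int : Integrable (fun ω => g₁ ω * (I ω * W ω)) μ :=
      hIWg₁_int.congr (ae_of_all _ hr)
    have hpull1 := condExp_mul_of_stronglyMeasurable_left (m := m) hg₁m.stronglyMeasurable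
      (show Integrable (g₁ * fun ω => I ω * W ω) μ from hg₁IW_int) hIW_int
    calc ∫ ω, I ω * W ω * g₁ ω ∂μ
        = ∫ ω, g₁ ω * (I ω * W ω) ∂μ := integral_congr_ae (ae_of_all _ hr)
      _ = ∫ ω, (μ[(g₁ * fun ω => I ω * W ω) | m]) ω ∂μ := (integral_condExp hm).symm
      _ = ∫ ω, g₁ ω * (πd ω * Ed ω) ∂μ := by
          refine integral_congr_ae (hpull1.trans ?_)
          filter_upwards [hKey] with ω h
          simp only [Pi.mul_apply]
          rw [h]
      _ = ∫ ω, πd ω * Ed ω * g₁ ω ∂μ := integral_congr_ae (ae_of_all _ fun ω => by ring)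
  have T2 : ∫ ω, I ω * g₂ ω ∂μ = ∫ ω, πd ω * g₂ ω ∂μ := by
    have hr : ∀ ω, I ω * g₂ ω = g₂ ω * I ω := fun ω => by ring
    have hg₂I_int : Integrable (fun ω => g₂ ω * I ω) μ := hIg₂_int.congr (ae_of_all _ hr)
    have hpull2 := condExp_mul_of_stronglyMeasurable_left (m := m) hg₂m.stronglyMeasurable
      (show Integrable (g₂ * I) μ from hg₂I_int) hI_int
    calc ∫ ω, I ω * g₂ ω ∂μ
        = ∫ ω, g₂ ω * I ω ∂μ := integral_congr_ae (ae_of_all _ hr)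
      _ = ∫ ω, (μ[(g₂ * I) | m]) ω ∂μ := (integral_condExp hm).symm
      _ = ∫ ω, g₂ ω * πd ω ∂μ := by
          refine integral_congr_ae (hpull2.trans ?_)
          filter_upwards [hπd] with ω h
          simp only [Pi.mul_apply]
          rw [← h]
      _ = ∫ ω, πd ω * g₂ ω ∂μ := integral_congr_ae (ae_of_all _ fun ω => by ring)
  -- pointwise decomposition and cancellation
  have claim1 : (fun ω => (I ω / πd ω * W ω - (I ω - πd ω) / πd ω * Ed ω - md)
        * ((I ω - πd ω) / πd ω * Ed ω))
      =ᵐ[μ] fun ω => I ω * W ω * g₁ ω + (I ω * g₂ ω + g₃ ω) := by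
    filter_upwards [hov] with ω h
    have h0 : πd ω ≠ 0 := (lt_of_lt_of_le hc h.1).ne'
    by_cases hb : ω ∈ B
    · simp only [hIB, Set.indicator_of_mem hb, hg₁def, hg₂def, hg₃def]
      field_simp
      ring
    · simp only [hIB, Set.indicator_of_notMem hb, hg₁def, hg₂def, hg₃def]
      field_simp
      ring
  have claim3 : (fun ω => πd ω * Ed ω * g₁ ω + (πd ω * g₂ ω + g₃ ω)) =ᵐ[μ]
      fun _ => (0 : ℝ) := by
    filter_upwards [hov] with ω h
    have h0 : πd ω ≠ 0 := (lt_of_lt_of_le hc h.1).ne'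
    simp only [hg₁def, hg₂def, hg₃def]
    field_simp
    ring
  calc ∫ ω, (I ω / πd ω * W ω - (I ω - πd ω) / πd ω * Ed ω - md)
        * ((I ω - πd ω) / πd ω * Ed ω) ∂μ
      = ∫ ω, (I ω * W ω * g₁ ω + (I ω * g₂ ω + g₃ ω)) ∂μ := integral_congr_ae claim1
    _ = ∫ ω, I ω * W ω * g₁ ω ∂μ + (∫ ω, I ω * g₂ ω ∂μ + ∫ ω, g₃ ω ∂μ) := by
        have h1 : Integrable (fun ω => I ω * g₂ ω + g₃ ω) μ := hIg₂_int.add hg₃_int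
        rw [integral_add hIWg₁_int h1, integral_add hIg₂_int hg₃_int]
    _ = ∫ ω, πd ω * Ed ω * g₁ ω ∂μ + (∫ ω, πd ω * g₂ ω ∂μ + ∫ ω, g₃ ω ∂μ) := by
        rw [T1, T2]
    _ = ∫ ω, (πd ω * Ed ω * g₁ ω + (πd ω * g₂ ω + g₃ ω)) ∂μ := by
        have h1 : Integrable (fun ω => πd ω * g₂ ω + g₃ ω) μ := hπg₂_int.add hg₃_int
        rw [integral_add hπEdg₁_int h1, integral_add hπg₂_int hg₃_int]
    _ = ∫ ω, (0 : ℝ) ∂μ := integral_congr_ae claim3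
    _ = 0 := integral_zero _ _

/-- Under unconfoundedness and overlap, with `L'(Y*(d) − β*_d)`
square-integrable, the efficient influence function
`S_d = (D_d/π*_d(X)) L'(Y − β*_d) − Z_d − m_d`, where
`Z_d = ((D_d − π*_d(X))/π*_d(X)) 𝓔_d(X)` and `𝓔_d(X) = E[L'(Y*(d) − β*_d) | σ(X)]`,
is orthogonal to `Z_d`: `E[S_d · Z_d] = 0`. -/
theorem influence_orthogonality
    {Ω : Type*} [MeasurableSpace Ω] [StandardBorelSpace Ω] [Nonempty Ω]
    (μ : Measure Ω) [IsProbabilityMeasure μ]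
    {J : ℕ} (D : Ω → Fin (J + 1)) (hD : Measurable D)
    {p : ℕ} (X : Ω → (Fin p → ℝ)) (hX : Measurable X)
    (Ystar : Fin (J + 1) → Ω → ℝ) (hY : ∀ d, Measurable (Ystar d))
    -- unconfoundedness
    (hUnconf : ∀ d : Fin (J + 1),
      CondIndepFun (MeasurableSpace.comap X inferInstance) hX.comap_le (Ystar d) D μ)
    -- propensity scores
    (π : Fin (J + 1) → Ω → ℝ)
    (hπmeas : ∀ d, Measurable[MeasurableSpace.comap X inferInstance] (π d))
    (hπ : ∀ d : Fin (J + 1), π d =ᵐ[μ]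
      μ[(fun ω => if D ω = d then (1 : ℝ) else 0) | MeasurableSpace.comap X inferInstance])
    -- overlap
    (c cbar : ℝ) (hc : 0 < c) (hcbar : cbar < 1)
    (hOverlap : ∀ d : Fin (J + 1), ∀ᵐ ω ∂μ, π d ω ∈ Set.Icc c cbar)
    -- convex loss with a.e. derivative `L'`
    (L L' : ℝ → ℝ) (hL : ConvexOn ℝ Set.univ L) (hL'meas : Measurable L')
    (hL' : ∀ᵐ y ∂(volume : Measure ℝ), HasDerivAt L (L' y) y)
    (d : Fin (J + 1)) (βstar : ℝ)
    (hsq : MemLp (fun ω => L' (Ystar d ω - βstar)) 2 μ)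
    -- `m_d := E[L'(Y*(d) − β*_d)]`
    (md : ℝ) (hmd : ∫ ω, L' (Ystar d ω - βstar) ∂μ = md)
    -- `𝓔_d(X)`, a `σ(X)`-measurable version of `E[L'(Y*(d) − β*_d) | σ(X)]`
    (Ed : Ω → ℝ) (hEdmeas : Measurable[MeasurableSpace.comap X inferInstance] Ed)
    (hEd : Ed =ᵐ[μ]
      μ[(fun ω => L' (Ystar d ω - βstar)) | MeasurableSpace.comap X inferInstance]) :
    ∫ ω,
        ((if D ω = d then (1 : ℝ) else 0) / π d ω * L' (Ystar (D ω) ω - βstar)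
            - ((if D ω = d then (1 : ℝ) else 0) - π d ω) / π d ω * Ed ω - md)
          * (((if D ω = d then (1 : ℝ) else 0) - π d ω) / π d ω * Ed ω) ∂μ = 0 := by
  have hIB : (fun ω => if D ω = d then (1:ℝ) else 0)
      = (D ⁻¹' {d}).indicator (fun _ => (1:ℝ)) := by
    funext ω; by_cases h : D ω = d <;>
      simp [Set.indicator_apply, Set.mem_preimage, h]
  have hπB : π d =ᵐ[μ] μ[(D ⁻¹' {d}).indicator (fun _ => (1:ℝ)) |
      MeasurableSpace.comap X inferInstance] := by
    have h := hπ d; rwa [hIB] at h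
  have hprod : ∀ t : Set ℝ, MeasurableSet t →
      μ[((Ystar d ⁻¹' t) ∩ (D ⁻¹' {d})).indicator (fun _ => (1:ℝ)) |
          MeasurableSpace.comap X inferInstance] =ᵐ[μ]
      fun ω => (μ[(Ystar d ⁻¹' t).indicator (fun _ => (1:ℝ)) |
          MeasurableSpace.comap X inferInstance]) ω *
        (μ[(D ⁻¹' {d}).indicator (fun _ => (1:ℝ)) |
          MeasurableSpace.comap X inferInstance]) ω := fun t ht =>
    (condIndepFun_iff_condExp_inter_preimage_eq_mul (hY d) hD).mp (hUnconf d) t {d} ht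
      (measurableSet_singleton d)
  have key := influence_orth_aux hX.comap_le μ (D ⁻¹' {d}) (hD (measurableSet_singleton d))
    (Ystar d) (hY d) (fun y => L' (y - βstar))
    (hL'meas.comp (measurable_id.sub measurable_const))
    (fun ω => if D ω = d then (1:ℝ) else 0) (fun ω => L' (Ystar d ω - βstar)) (π d) Ed
    hIB rfl (hπmeas d) hEdmeas hπB hEd c cbar hc hcbar (hOverlap d) hsq hprod md
  refine Eq.trans (integral_congr_ae (ae_of_all _ fun ω => ?_)) key
  dsimp only
  by_cases h : D ω = d
  · rw [h]
  · simp [h]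
end

section
/- Let α ∈ (0,1] and let (p_n)_{n≥3} be a sequence of positive real numbers with p_n → ∞ such that p_n ≤ C · α · log n / log log n for all sufficiently large n, for some constant 0 < C < 1/2. Then n^{−(α/(p_n+1))/(4(1+α/(p_n+1)))} · (log n)^{1/2 + (α/(p_n+1))/(2(1+α/(p_n+1)))} → 0 as n → ∞. Equivalently, (n/(log n)²)^{−(1 + 2α/(p_n+1))/(4(1 + α/(p_n+1)))} = o(n^{−1/4}), so the L²-convergence rate of the neural-network sieve estimator is of order o(n^{−1/4}) under this growth restriction on the covariate dimension. -/
open Filter Asymptotics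

lemma aux_half (a : ℝ) (h : (0:ℝ) < 1 + a) :
    2 * (a / (4 * (1 + a))) = a / (2 * (1 + a)) := by
  field_simp
  ring

lemma aux_quarter (a : ℝ) (h : (0:ℝ) < 1 + a) :
    -((1 + 2 * a) / (4 * (1 + a))) = -(1 / 4 + a / (4 * (1 + a))) := by
  have h' : (1 + a) ≠ 0 := h.ne'
  field_simp
  ring

set_option maxHeartbeats 1000000 in
/-- If the covariate dimension `p_n → ∞` satisfies
`p_n ≤ C·α·log n / log log n` eventually, for some `0 < C < 1/2`, then
`n^{−(α/(p_n+1))/(4(1+α/(p_n+1)))} (log n)^{1/2 + (α/(p_n+1))/(2(1+α/(p_n+1)))} → 0`;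
equivalently, `(n/(log n)²)^{−(1+2α/(p_n+1))/(4(1+α/(p_n+1)))} = o(n^{−1/4})`. -/
theorem dimension_growth_rate
    (α : ℝ) (hα0 : 0 < α) (hα1 : α ≤ 1)
    (p : ℕ → ℝ) (hp_pos : ∀ n, 0 < p n)
    (hp_top : Tendsto p atTop atTop)
    (C : ℝ) (hC0 : 0 < C) (hC : C < 1 / 2)
    (hbound : ∀ᶠ n : ℕ in atTop, p n ≤ C * α * Real.log n / Real.log (Real.log n)) :
    Tendsto (fun n : ℕ =>
        (n : ℝ) ^ (-((α / (p n + 1)) / (4 * (1 + α / (p n + 1)))))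
          * Real.log n ^ ((1 : ℝ) / 2 + (α / (p n + 1)) / (2 * (1 + α / (p n + 1)))))
      atTop (nhds 0) ∧
    (fun n : ℕ => ((n : ℝ) / Real.log n ^ 2) ^
        (-((1 + 2 * α / (p n + 1)) / (4 * (1 + α / (p n + 1))))))
      =o[atTop] fun n : ℕ => (n : ℝ) ^ (-(1 / 4 : ℝ)) := by
  have hp1 : ∀ n, (0:ℝ) < p n + 1 := fun n => by linarith [hp_pos n]
  set r : ℕ → ℝ := fun n => α / (p n + 1) with hrdef
  have hr_pos : ∀ n, 0 < r n := fun n => div_pos hα0 (hp1 n)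
  have h1r : ∀ n, (0:ℝ) < 1 + r n := fun n => by linarith [hr_pos n]
  have hr0 : Tendsto r atTop (nhds 0) :=
    tendsto_const_nhds.div_atTop (tendsto_atTop_add_const_right _ 1 hp_top)
  set e : ℕ → ℝ := fun n => r n / (4 * (1 + r n)) with hedef
  have he_pos : ∀ n, 0 < e n := fun n => div_pos (hr_pos n) (by linarith [hr_pos n])
  have he_le : ∀ n, e n ≤ r n / 4 := by
    intro n
    rw [hedef, div_le_div_iff₀ (by linarith [hr_pos n]) (by norm_num)]
    nlinarith [hr_pos n]
  have he0 : Tendsto e atTop (nhds 0) :=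
    squeeze_zero (fun n => (he_pos n).le) he_le (by simpa using hr0.div_const 4)
  have hL : Tendsto (fun n : ℕ => Real.log n) atTop atTop :=
    Real.tendsto_log_atTop.comp tendsto_natCast_atTop_atTop
  have hLL : Tendsto (fun n : ℕ => Real.log (Real.log n)) atTop atTop :=
    Real.tendsto_log_atTop.comp hL
  have hdiv : Tendsto (fun x : ℝ => Real.log x / x) atTop (nhds 0) :=
    Real.isLittleO_log_id_atTop.tendsto_div_nhds_zero
  have hratio : Tendsto (fun n : ℕ => Real.log (Real.log n) / Real.log n) atTop (nhds 0) := by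
    exact hdiv.comp hL
  have hLLaL : Tendsto (fun n : ℕ => Real.log (Real.log n) / (α * Real.log n)) atTop (nhds 0) := by
    simpa [div_div, mul_comm] using hratio.div_const α
  set gf : ℕ → ℝ :=
      fun n => (1/(4*(1 + r n))) * (1/(C + Real.log (Real.log n)/(α * Real.log n))) with hgdef
  have h2a : Tendsto (fun n : ℕ => 4*(1 + r n)) atTop (nhds 4) := by
    simpa using (hr0.const_add (1:ℝ)).const_mul (4:ℝ)
  have h2 : Tendsto (fun n : ℕ => 1/(4*(1 + r n))) atTop (nhds (1/4)) :=
    tendsto_const_nhds.div h2a (by norm_num)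
  have h3a : Tendsto (fun n : ℕ => C + Real.log (Real.log n)/(α * Real.log n)) atTop (nhds C) := by
    simpa using tendsto_const_nhds.add hLLaL
  have h3 : Tendsto (fun n : ℕ => 1/(C + Real.log (Real.log n)/(α * Real.log n)))
      atTop (nhds (1/C)) := tendsto_const_nhds.div h3a hC0.ne'
  have hg : Tendsto gf atTop (nhds (1/(4*C))) := by
    rw [show (1:ℝ)/(4*C) = 1/4 * (1/C) by rw [div_mul_div_comm]; norm_num]
    exact h2.mul h3
  -- the key eventual inequality
  have hev : ∀ᶠ n : ℕ in atTop, gf n * Real.log (Real.log n) ≤ e n * Real.log n := by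
    filter_upwards [hbound, hL.eventually_gt_atTop 1] with n hb hLn
    have hL0 : (0:ℝ) < Real.log n := by linarith
    have hM0 : 0 < Real.log (Real.log n) := Real.log_pos hLn
    have hden : 0 < C + Real.log (Real.log n)/(α * Real.log n) := by
      have : 0 ≤ Real.log (Real.log n)/(α * Real.log n) :=
        div_nonneg hM0.le (by positivity)
      linarith
    have hp' : p n * Real.log (Real.log n) ≤ C * α * Real.log n := by
      rw [le_div_iff₀ hM0] at hb; exact hb
    have step1 : (1/(C + Real.log (Real.log n)/(α * Real.log n))) * Real.log (Real.log n)
        ≤ r n * Real.log n := by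
      rw [div_mul_eq_mul_div, one_mul, div_le_iff₀ hden]
      have hr : r n * Real.log n * (C + Real.log (Real.log n)/(α * Real.log n))
          = (C * α * Real.log n + Real.log (Real.log n)) / (p n + 1) := by
        simp only [hrdef]
        field_simp [hα0.ne', hL0.ne', (hp1 n).ne']
      rw [hr, le_div_iff₀ (hp1 n)]
      nlinarith [hp', hM0]
    calc gf n * Real.log (Real.log n)
        = (1/(4*(1 + r n))) *
            ((1/(C + Real.log (Real.log n)/(α * Real.log n))) * Real.log (Real.log n)) := by
          simp only [hgdef]; ring
      _ ≤ (1/(4*(1 + r n))) * (r n * Real.log n) := by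
          exact mul_le_mul_of_nonneg_left step1
            (div_nonneg zero_le_one (by nlinarith [h1r n]))
      _ = e n * Real.log n := by simp only [hedef]; ring
  -- choose constants
  have h4C : (0:ℝ) < 4 * C := by positivity
  have h12 : (1:ℝ)/2 < 1/(4*C) := by
    rw [div_lt_div_iff₀ (by norm_num) h4C]; linarith
  set δ : ℝ := 1/(4*C) - 1/2 with hδdef
  have hδ : (0:ℝ) < δ := by rw [hδdef]; linarith
  have hclt : 1/2 + δ/2 < 1/(4*C) := by rw [hδdef]; linarith
  set E : ℕ → ℝ :=
    fun n => Real.log n * (-(e n)) + Real.log (Real.log n) * (1/2 + 2 * e n) with hEdef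
  have hEbound : ∀ᶠ n : ℕ in atTop, E n ≤ -(δ/4 * Real.log (Real.log n)) := by
    filter_upwards [hev, hg.eventually (eventually_gt_nhds hclt),
      he0.eventually (eventually_lt_nhds (show (0:ℝ) < δ/8 by positivity)),
      hL.eventually_gt_atTop 1] with n h1 h2 h3 h4
    have hM0 : 0 < Real.log (Real.log n) := Real.log_pos h4
    have hA : (1/2 + δ/2) * Real.log (Real.log n) ≤ e n * Real.log n :=
      le_trans (mul_le_mul_of_nonneg_right h2.le hM0.le) h1
    have hB : (2 * e n) * Real.log (Real.log n) ≤ (δ/4) * Real.log (Real.log n) :=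
      mul_le_mul_of_nonneg_right (by linarith) hM0.le
    simp only [hEdef]
    nlinarith [hA, hB, hM0]
  have hE : Tendsto E atTop atBot := by
    apply tendsto_atBot_mono' atTop hEbound
    exact tendsto_neg_atTop_atBot.comp
      (Tendsto.const_mul_atTop (by positivity : (0:ℝ) < δ/4) hLL)
  have hexp : Tendsto (fun n => Real.exp (E n)) atTop (nhds 0) :=
    Real.tendsto_exp_atBot.comp hE
  have hAeq : ∀ᶠ n : ℕ in atTop,
      Real.exp (E n) = (n:ℝ) ^ (-(e n)) * Real.log n ^ ((1:ℝ)/2 + 2 * e n) := by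
    filter_upwards [eventually_gt_atTop 1, hL.eventually_gt_atTop 1] with n hn hLn
    have hn0 : (0:ℝ) < n := by exact_mod_cast Nat.lt_of_lt_of_le Nat.zero_lt_one hn.le
    have hL0 : (0:ℝ) < Real.log n := by linarith
    rw [Real.rpow_def_of_pos hn0, Real.rpow_def_of_pos hL0, ← Real.exp_add, hEdef]
  constructor
  · apply (hexp.congr' hAeq).congr
    intro n
    have h1 : (0:ℝ) < 1 + α / (p n + 1) := by simpa [hrdef] using h1r n
    simp only [hedef, hrdef]
    rw [aux_half _ h1]
  · have hBeq : ∀ᶠ n : ℕ in atTop,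
        Real.exp (E n) = ((n:ℝ) / Real.log n ^ 2) ^
            (-((1 + 2 * α / (p n + 1)) / (4 * (1 + α / (p n + 1)))))
          / (n:ℝ) ^ (-(1/4 : ℝ)) := by
      filter_upwards [eventually_gt_atTop 1, hL.eventually_gt_atTop 1] with n hn hLn
      have hn0 : (0:ℝ) < n := by exact_mod_cast Nat.lt_of_lt_of_le Nat.zero_lt_one hn.le
      have hL0 : (0:ℝ) < Real.log n := by linarith
      have hq : (0:ℝ) < (n:ℝ) / Real.log n ^ 2 := by positivity
      have h1 : (0:ℝ) < 1 + α / (p n + 1) := by simpa [hrdef] using h1r n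
      have hexp_eq : -((1 + 2 * α / (p n + 1)) / (4 * (1 + α / (p n + 1))))
          = -(1/4 + e n) := by
        simp only [hedef, hrdef]
        rw [mul_div_assoc, aux_quarter _ h1]
      rw [hexp_eq, Real.rpow_def_of_pos hq, Real.rpow_def_of_pos hn0, ← Real.exp_sub, hEdef]
      congr 1
      rw [Real.log_div hn0.ne' (by positivity), Real.log_pow]
      push_cast
      ring
    rw [isLittleO_iff_tendsto']
    · exact hexp.congr' hBeq
    · filter_upwards [eventually_gt_atTop 0] with n hn h
      exact absurd h (Real.rpow_pos_of_pos (by exact_mod_cast hn) _).ne'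
end
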